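/- arXiv:1103.5254 — 7 statements merged into one kernel-verified Lean document; each statement's English description precedes it below -/
import Mathlib

section
/- Fix a finite nonempty index set Φ, a nonempty finite outcome set A, a natural number K, and for every f ∈ Φ a matrix R^f ∈ ℝ^{A×K} (with row r^f(a) ∈ ℝ^K for each outcome a ∈ A). Let σ̂ and σ̃ be probability distributions on A. Then the following are equivalent: (i) for every w ∈ ℝ^K, max_{f∈Φ} Σ_{a∈A} σ̂_a (r^f(a)·w) ≤ max_{g∈Φ} Σ_{a∈A} σ̃_a (r^g(a)·w); (ii) for every f ∈ Φ there exists a probability vector η^f ∈ Δ(Φ) such that the vector Σ_{a∈A} σ̂_a r^f(a) ∈ ℝ^K equals Σ_{g∈Φ} η^f_g · (Σ_{a∈A} σ̃_a r^g(a)). -/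
open Finset

private lemma swap_sum {A : Type*} [Fintype A] {K : ℕ} (σ : A → ℝ) (r : A → Fin K → ℝ)
    (w : Fin K → ℝ) :
    ∑ a, σ a * ∑ k, r a k * w k = ∑ k, (∑ a, σ a * r a k) * w k := by
  simp_rw [Finset.mul_sum, Finset.sum_mul, mul_assoc]
  exact Finset.sum_comm

private lemma clm_eq_sum {K : ℕ} (F : (Fin K → ℝ) →L[ℝ] ℝ) (v : Fin K → ℝ) :
    F v = ∑ k, v k * F (Pi.single k 1) := by
  have hv : v = ∑ k, v k • (Pi.single k 1 : Fin K → ℝ) := by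
    funext j
    simp [Pi.single_apply, Finset.sum_apply, mul_ite]
  conv_lhs => rw [hv]
  rw [map_sum]
  simp [smul_eq_mul]

/-- **Theorem 1 (ICE polytope characterization).**
A distribution `σh` satisfies strong rationality with respect to `σt`
(i.e. for every utility weight vector `w`, the maximal expected regret of `σh`
is at most that of `σt`) if and only if `σh` lies in the Inverse Correlated
Equilibria (ICE) polytope determined by `σt`. -/
theorem strong_rationality_iff_ICE
    {Φ A : Type*} [Fintype Φ] [Nonempty Φ] [Fintype A] [Nonempty A]
    {K : ℕ} (R : Φ → A → Fin K → ℝ)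
    (σh σt : A → ℝ) (hσh : σh ∈ stdSimplex ℝ A) (hσt : σt ∈ stdSimplex ℝ A) :
    (∀ w : Fin K → ℝ,
        univ.sup' univ_nonempty
            (fun f : Φ => ∑ a, σh a * ∑ k, R f a k * w k) ≤
        univ.sup' univ_nonempty
            (fun g : Φ => ∑ a, σt a * ∑ k, R g a k * w k)) ↔
    (∀ f : Φ, ∃ η : Φ → ℝ, η ∈ stdSimplex ℝ Φ ∧
        ∀ k : Fin K, ∑ a, σh a * R f a k = ∑ g, η g * ∑ a, σt a * R g a k) := by
  classical
  set x : Φ → Fin K → ℝ := fun f k => ∑ a, σh a * R f a k with hx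
  set y : Φ → Fin K → ℝ := fun g k => ∑ a, σt a * R g a k with hy
  constructor
  · -- strong rationality → ICE membership
    intro h f
    -- Claim: x f ∈ convexHull ℝ (Set.range y)
    have hmem : x f ∈ convexHull ℝ (Set.range y) := by
      by_contra hnot
      have hconv : Convex ℝ (convexHull ℝ (Set.range y)) := convex_convexHull ℝ _
      have hclosed : IsClosed (convexHull ℝ (Set.range y)) :=
        ((Set.finite_range y).isCompact_convexHull (𝕜 := ℝ)).isClosed
      obtain ⟨F, u, hFu, hux⟩ := geometric_hahn_banach_closed_point hconv hclosed hnot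
      set w : Fin K → ℝ := fun k => F (Pi.single k 1) with hw
      have hFw : ∀ v : Fin K → ℝ, F v = ∑ k, v k * w k := fun v => clm_eq_sum F v
      have h1 : F (x f) ≤ univ.sup' univ_nonempty
          (fun f' : Φ => ∑ a, σh a * ∑ k, R f' a k * w k) := by
        rw [hFw]
        have h1' := Finset.le_sup'
          (fun f' : Φ => ∑ a, σh a * ∑ k, R f' a k * w k) (Finset.mem_univ f)
        rw [swap_sum σh (R f) w] at h1'
        exact h1'
      have h2 : univ.sup' univ_nonempty
          (fun g : Φ => ∑ a, σt a * ∑ k, R g a k * w k) < u := by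
        rw [Finset.sup'_lt_iff]
        intro g _
        have hlt := hFu (y g) (subset_convexHull ℝ _ (Set.mem_range_self g))
        rw [hFw] at hlt
        rw [swap_sum σt (R g) w]
        exact hlt
      exact absurd ((h1.trans (h w)).trans h2.le) (not_le.mpr hux)
    -- extract convex weights
    rw [_root_.convexHull_eq] at hmem
    obtain ⟨ι, t, wts, z, hwts0, hwts1, hzr, hcm⟩ := hmem
    set c : ι → Φ := fun i =>
      if h : i ∈ t then Classical.choose (hzr i h) else Classical.arbitrary Φ with hcdef
    have hc : ∀ i ∈ t, y (c i) = z i := by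
      intro i hi
      simp only [hcdef, dif_pos hi]
      exact Classical.choose_spec (hzr i hi)
    refine ⟨fun g => ∑ i ∈ t.filter (fun i => c i = g), wts i, ⟨?_, ?_⟩, ?_⟩
    · intro g
      exact Finset.sum_nonneg fun i hi => hwts0 i (Finset.mem_of_mem_filter i hi)
    · rw [Finset.sum_fiberwise_of_maps_to (fun i _ => Finset.mem_univ (c i))]
      exact hwts1
    · -- vector equality
      have hvec : (∑ g, (∑ i ∈ t.filter (fun i => c i = g), wts i) • y g)
          = x f := by
        have : ∀ g, (∑ i ∈ t.filter (fun i => c i = g), wts i) • y g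
            = ∑ i ∈ t.filter (fun i => c i = g), wts i • y (c i) := by
          intro g
          rw [Finset.sum_smul]
          refine Finset.sum_congr rfl fun i hi => ?_
          rw [(Finset.mem_filter.mp hi).2]
        simp_rw [this]
        rw [Finset.sum_fiberwise_of_maps_to (fun i _ => Finset.mem_univ (c i))]
        rw [← hcm, Finset.centerMass_eq_of_sum_1 _ _ hwts1]
        exact Finset.sum_congr rfl fun i hi => by rw [hc i hi]
      intro k
      have := congrFun hvec k
      simp only [Finset.sum_apply, Pi.smul_apply, smul_eq_mul] at this
      exact this.symm
  · -- ICE membership → strong rationality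
    intro h w
    rw [Finset.sup'_le_iff]
    intro f _
    obtain ⟨η, ⟨hη0, hη1⟩, hηeq⟩ := h f
    have key : ∑ a, σh a * ∑ k, R f a k * w k
        = ∑ g, η g * ∑ a, σt a * ∑ k, R g a k * w k := by
      rw [swap_sum]
      have : ∀ g, η g * ∑ a, σt a * ∑ k, R g a k * w k
          = η g * ∑ k, (y g k) * w k := by
        intro g; rw [swap_sum]
      simp_rw [this]
      calc ∑ k, x f k * w k = ∑ k, (∑ g, η g * y g k) * w k := by
            exact Finset.sum_congr rfl fun k _ => congrArg (· * w k) (hηeq k)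
        _ = ∑ g, η g * ∑ k, y g k * w k := by
            simp_rw [Finset.sum_mul, Finset.mul_sum, mul_assoc]
            exact Finset.sum_comm
    rw [key]
    calc ∑ g, η g * ∑ a, σt a * ∑ k, R g a k * w k
        ≤ ∑ g, η g * (univ.sup' univ_nonempty
            (fun g : Φ => ∑ a, σt a * ∑ k, R g a k * w k)) := by
          apply Finset.sum_le_sum
          intro g _
          exact mul_le_mul_of_nonneg_left
            (Finset.le_sup' (fun g : Φ => ∑ a, σt a * ∑ k, R g a k * w k)
              (Finset.mem_univ g)) (hη0 g)
      _ = univ.sup' univ_nonempty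
            (fun g : Φ => ∑ a, σt a * ∑ k, R g a k * w k) := by
          rw [← Finset.sum_mul, hη1, one_mul]
end

section
/- Let A be a nonempty finite index set, let a_i ∈ ℝ^K for each i ∈ A, and let b ∈ ℝ^K. Then b·w ≤ max_{i∈A} (a_i·w) holds for every w ∈ ℝ^K if and only if there exists a probability vector λ ∈ Δ(A) such that b = Σ_{i∈A} λ_i a_i, i.e. b lies in the convex hull of {a_i : i ∈ A}. -/
open Finset

/-- **Technical Lemma 2 (support-function characterization of the convex hull).**
`b·w ≤ max_{i∈A} (a_i·w)` holds for every weight vector `w ∈ ℝ^K` if and only if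
`b` is a convex combination `Σ_i l_i a_i` of the points `a_i` for some probability
vector `l ∈ Δ(A)`. -/
theorem forall_dot_le_max_iff_convex_combination
    {A : Type*} [Fintype A] [Nonempty A] {K : ℕ}
    (a : A → Fin K → ℝ) (b : Fin K → ℝ) :
    (∀ w : Fin K → ℝ,
        (∑ k, b k * w k) ≤ univ.sup' univ_nonempty (fun i : A => ∑ k, a i k * w k)) ↔
    ∃ l : A → ℝ, l ∈ stdSimplex ℝ A ∧ b = fun k => ∑ i, l i * a i k := by
  classical
  constructor
  · intro h
    by_contra hne
    -- show b ∈ convexHull of range a, derive contradiction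
    have hb : b ∈ convexHull ℝ (Set.range a) := by
      by_contra hb
      obtain ⟨f, u, hfu, hub⟩ :=
        geometric_hahn_banach_closed_point (convex_convexHull ℝ _)
          ((Set.finite_range a).isClosed_convexHull (𝕜 := ℝ)) hb
      set w : Fin K → ℝ := fun k => f (Pi.single k (1:ℝ)) with hw
      have hf : ∀ x : Fin K → ℝ, f x = ∑ k, x k * w k := by
        intro x
        have hx : x = ∑ k, x k • (Pi.single k (1:ℝ) : Fin K → ℝ) := by
          ext j; simp [Pi.single_apply]
        conv_lhs => rw [hx]
        simp [map_sum, map_smul, smul_eq_mul, hw]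
      have hlt : ∀ i : A, (∑ k, a i k * w k) < ∑ k, b k * w k := by
        intro i
        have h1 := hfu (a i) (subset_convexHull ℝ _ (Set.mem_range_self i))
        rw [hf] at h1 hub
        linarith
      have h2 := h w
      obtain ⟨i, -, hi⟩ := exists_mem_eq_sup' (univ_nonempty (α := A))
        (fun i : A => ∑ k, a i k * w k)
      rw [hi] at h2
      exact absurd h2 (not_le.2 (hlt i))
    rw [convexHull_range_eq_exists_affineCombination] at hb
    obtain ⟨s, w, hw0, hw1, hbw⟩ := hb
    apply hne
    refine ⟨fun i => if i ∈ s then w i else 0, ⟨?_, ?_⟩, ?_⟩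
    · intro i; dsimp; split
      · exact hw0 _ ‹_›
      · exact le_rfl
    · simpa [Finset.sum_ite_mem] using hw1
    · have : b = ∑ i ∈ s, w i • a i := by
        rw [← hbw, Finset.affineCombination_eq_linear_combination _ _ _ hw1]
      ext k
      rw [this, Finset.sum_apply, eq_comm]
      simp only [Pi.smul_apply, smul_eq_mul, ite_mul, zero_mul]
      rw [Finset.sum_ite_mem, Finset.univ_inter]
  · rintro ⟨l, ⟨hl0, hl1⟩, rfl⟩
    intro w
    set M := univ.sup' univ_nonempty (fun i : A => ∑ k, a i k * w k) with hM
    calc (∑ k, (∑ i, l i * a i k) * w k)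
        = ∑ i, l i * ∑ k, a i k * w k := by
          simp_rw [Finset.sum_mul, Finset.mul_sum, mul_assoc]
          exact Finset.sum_comm
      _ ≤ ∑ i, l i * M := by
          apply Finset.sum_le_sum
          intro i _
          exact mul_le_mul_of_nonneg_left
            (Finset.le_sup' (fun i : A => ∑ k, a i k * w k) (mem_univ i)) (hl0 i)
      _ = M := by rw [← Finset.sum_mul, hl1, one_mul]
end

section
/- Fix a finite nonempty index set Φ, a nonempty finite outcome set A, a natural number K, for every f ∈ Φ a matrix R^f ∈ ℝ^{A×K} with rows r^f(a), probability distributions σ̂, σ̃ on A, and ν ≥ 0. Suppose the ICE constraints hold up to slack ν in the sup norm: for every f ∈ Φ there exists η^f ∈ Δ(Φ) such that every coordinate k ∈ {1,…,K} satisfies |(Σ_{a∈A} σ̂_a r^f(a))_k − (Σ_{g∈Φ} η^f_g Σ_{a∈A} σ̃_a r^g(a))_k| ≤ ν. Then for every w ∈ ℝ^K, Regret^Φ(σ̂,w) ≤ Regret^Φ(σ̃,w) + ν‖w‖₁, where ‖w‖₁ = Σ_{k=1}^K |w_k|. -/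
open Finset

/-- **Lemma 3 (slack bound on regret violation).**
If `σh` satisfies the ICE constraints with respect to `σt` up to slack `ν`
(coordinatewise, in absolute value), then for every utility weight vector `w`
the regret of `σh` exceeds that of `σt` by at most `ν‖w‖₁`. -/
theorem regret_le_of_slack_ICE
    {Φ A : Type*} [Fintype Φ] [Nonempty Φ] [Fintype A] [Nonempty A]
    {K : ℕ} (R : Φ → A → Fin K → ℝ)
    (σh σt : A → ℝ) (hσh : σh ∈ stdSimplex ℝ A) (hσt : σt ∈ stdSimplex ℝ A)
    (ν : ℝ) (hν : 0 ≤ ν)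
    (hslack : ∀ f : Φ, ∃ η : Φ → ℝ, η ∈ stdSimplex ℝ Φ ∧
      ∀ k : Fin K,
        |(∑ a, σh a * R f a k) - ∑ g, η g * ∑ a, σt a * R g a k| ≤ ν) :
    ∀ w : Fin K → ℝ,
      univ.sup' univ_nonempty
          (fun f : Φ => ∑ a, σh a * ∑ k, R f a k * w k) ≤
      univ.sup' univ_nonempty
          (fun f : Φ => ∑ a, σt a * ∑ k, R f a k * w k) + ν * ∑ k, |w k| := by
  intro w
  set S := univ.sup' univ_nonempty
      (fun f : Φ => ∑ a, σt a * ∑ k, R f a k * w k) with hS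
  apply Finset.sup'_le
  intro f _
  obtain ⟨η, ⟨hη0, hη1⟩, hk⟩ := hslack f
  -- swap sums
  have swap : ∀ (σ : A → ℝ) (g : Φ),
      ∑ a, σ a * ∑ k, R g a k * w k = ∑ k, (∑ a, σ a * R g a k) * w k := by
    intro σ g
    simp only [Finset.mul_sum, Finset.sum_mul, mul_assoc]
    exact Finset.sum_comm
  have key : ∑ k, (∑ a, σh a * R f a k) * w k ≤
      ∑ k, (∑ g, η g * ∑ a, σt a * R g a k) * w k + ν * ∑ k, |w k| := by
    have h1 : ∑ k, (∑ a, σh a * R f a k) * w k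
        - ∑ k, (∑ g, η g * ∑ a, σt a * R g a k) * w k
        = ∑ k, ((∑ a, σh a * R f a k) - ∑ g, η g * ∑ a, σt a * R g a k) * w k := by
      rw [← Finset.sum_sub_distrib]; simp [sub_mul]
    have h2 : ∑ k, ((∑ a, σh a * R f a k) - ∑ g, η g * ∑ a, σt a * R g a k) * w k
        ≤ ν * ∑ k, |w k| := by
      calc ∑ k, ((∑ a, σh a * R f a k) - ∑ g, η g * ∑ a, σt a * R g a k) * w k
          ≤ ∑ k, ν * |w k| := by
            apply Finset.sum_le_sum
            intro k _
            calc ((∑ a, σh a * R f a k) - ∑ g, η g * ∑ a, σt a * R g a k) * w k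
                ≤ |((∑ a, σh a * R f a k) - ∑ g, η g * ∑ a, σt a * R g a k) * w k| :=
                  le_abs_self _
              _ = |(∑ a, σh a * R f a k) - ∑ g, η g * ∑ a, σt a * R g a k| * |w k| := by
                  rw [abs_mul]
              _ ≤ ν * |w k| := by
                  exact mul_le_mul_of_nonneg_right (hk k) (abs_nonneg _)
        _ = ν * ∑ k, |w k| := by rw [Finset.mul_sum]
    linarith
  have hmix : ∑ k, (∑ g, η g * ∑ a, σt a * R g a k) * w k ≤ S := by
    have e1 : ∑ k, (∑ g, η g * ∑ a, σt a * R g a k) * w k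
        = ∑ g, η g * ∑ k, (∑ a, σt a * R g a k) * w k := by
      simp only [Finset.mul_sum, Finset.sum_mul, mul_assoc]
      exact Finset.sum_comm
    rw [e1]
    have e2 : ∀ g : Φ, ∑ k, (∑ a, σt a * R g a k) * w k ≤ S := by
      intro g
      rw [← swap σt g]
      exact Finset.le_sup' (fun f : Φ => ∑ a, σt a * ∑ k, R f a k * w k) (Finset.mem_univ g)
    calc ∑ g, η g * ∑ k, (∑ a, σt a * R g a k) * w k
        ≤ ∑ g, η g * S := by
          apply Finset.sum_le_sum
          intro g _
          exact mul_le_mul_of_nonneg_left (e2 g) (hη0 g)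
      _ = S := by rw [← Finset.sum_mul, hη1, one_mul]
  rw [swap σh f]
  linarith
end

section
/- Let A be a nonempty finite set and let S ⊆ Δ(A) be a nonempty closed convex set of probability distributions on A. Let σ* ∈ S maximize the Shannon entropy H over S. Then σ* minimizes the worst-case log-loss over all predictive distributions: for every σ̂ ∈ Δ(A), sup_{σ∈S} ( −Σ_{a∈A} σ_a log σ̂_a ) ≥ sup_{σ∈S} ( −Σ_{a∈A} σ_a log σ*_a ) = H(σ*). (Here −Σ_a σ_a log σ̂_a is interpreted as +∞ if σ_a > 0 and σ̂_a = 0 for some a, and 0·log 0 = 0.) -/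
open Finset

/-- Shannon entropy of a distribution on a finite set, with the convention
`0 · log 0 = 0` (note `Real.log 0 = 0` in Mathlib). -/
noncomputable def shannonEntropy {A : Type*} [Fintype A] (σ : A → ℝ) : ℝ :=
  -∑ a, σ a * Real.log (σ a)

/-- Log-loss of the predictive distribution `σh` against the true distribution `σ`,
valued in the extended reals: it is `+∞` if some outcome has positive true
probability but zero predicted probability, and otherwise `−Σ_a σ_a log σh_a`
(with `0 · log 0 = 0`). -/
noncomputable def logLoss {A : Type*} [Fintype A] (σ σh : A → ℝ) : EReal :=
  if ∃ a, 0 < σ a ∧ σh a = 0 then ⊤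
  else ((-∑ a, σ a * Real.log (σh a) : ℝ) : EReal)

/-- Bregman-divergence bound for `x log x`. -/
lemma key_pointwise (x h : ℝ) (hx : 0 < x) (hxh : 0 ≤ x + h) :
    (x + h) * Real.log (x + h) - x * Real.log x - h * (Real.log x + 1) ≤ h ^ 2 / x := by
  rcases hxh.eq_or_lt with h0 | h0
  · have hh : h = -x := by linarith
    subst hh
    simp only [add_neg_cancel, Real.log_zero, mul_zero, zero_sub, neg_mul, neg_sub]
    rw [le_div_iff₀ hx]
    nlinarith [Real.log_le_sub_one_of_pos hx]
  · have h1 : Real.log ((x + h) / x) ≤ (x + h) / x - 1 :=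
      Real.log_le_sub_one_of_pos (by positivity)
    rw [Real.log_div h0.ne' hx.ne'] at h1
    have h2 : (Real.log (x + h) - Real.log x) * x ≤ h := by
      have := mul_le_mul_of_nonneg_right h1 hx.le
      have he : ((x + h) / x - 1) * x = h := by field_simp; ring
      nlinarith
    rw [le_div_iff₀ hx]
    nlinarith [mul_le_mul_of_nonneg_left h2 h0.le]

/-- Gibbs' inequality (cross entropy is at least entropy). -/
lemma gibbs {A : Type*} [Fintype A] (σ σh : A → ℝ)
    (h1 : ∀ a, 0 ≤ σ a) (h2 : ∑ a, σ a = 1)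
    (h3 : ∀ a, 0 ≤ σh a) (h4 : ∑ a, σh a = 1)
    (h5 : ∀ a, 0 < σ a → 0 < σh a) :
    -∑ a, σ a * Real.log (σ a) ≤ -∑ a, σ a * Real.log (σh a) := by
  have key : ∀ a, σ a * Real.log (σh a) - σ a * Real.log (σ a) ≤ σh a - σ a := by
    intro a
    rcases (h1 a).eq_or_lt with h | h
    · simp [← h, h3 a]
    · have hq := h5 a h
      have hl : Real.log (σh a / σ a) ≤ σh a / σ a - 1 :=
        Real.log_le_sub_one_of_pos (by positivity)
      rw [Real.log_div hq.ne' h.ne'] at hl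
      have := mul_le_mul_of_nonneg_right hl h.le
      have he : (σh a / σ a - 1) * σ a = σh a - σ a := by field_simp
      nlinarith
  have hsum := Finset.sum_le_sum (fun a (_ : a ∈ univ) => key a)
  rw [Finset.sum_sub_distrib, Finset.sum_sub_distrib, h2, h4] at hsum
  linarith

/-- **Lemma 2 (Grünwald–Dawid, finite case).**
Let `S` be a nonempty closed convex set of distributions on a finite set `A`, and
let `σs ∈ S` maximize the Shannon entropy over `S`. Then `σs` minimizes the
worst-case log-loss over all predictive distributions: for every `σh ∈ Δ(A)`,
the adversarial log-loss of `σh` over `S` is at least that of `σs`, and the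
latter equals `H(σs)`. -/
theorem maxent_minimizes_worst_case_log_loss
    {A : Type*} [Fintype A] [Nonempty A]
    (S : Set (A → ℝ)) (hS : S ⊆ stdSimplex ℝ A) (hne : S.Nonempty)
    (hclosed : IsClosed S) (hconv : Convex ℝ S)
    (σs : A → ℝ) (hσs : σs ∈ S)
    (hmax : ∀ σ ∈ S, shannonEntropy σ ≤ shannonEntropy σs) :
    (∀ σh ∈ stdSimplex ℝ A,
        (⨆ σ ∈ S, logLoss σ σs) ≤ ⨆ σ ∈ S, logLoss σ σh) ∧
      (⨆ σ ∈ S, logLoss σ σs) = ((shannonEntropy σs : ℝ) : EReal) := by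
  classical
  have hspos : ∀ a, 0 ≤ σs a := (hS hσs).1
  have hssum : ∑ a, σs a = 1 := (hS hσs).2
  have hent : ∀ σ : A → ℝ, shannonEntropy σ = ∑ a, Real.negMulLog (σ a) := by
    intro σ
    simp [shannonEntropy, Real.negMulLog, ← Finset.sum_neg_distrib]
  -- Step 1: the support of any σ ∈ S is contained in the support of σs
  have hsupp : ∀ σ ∈ S, ∀ a, 0 < σ a → 0 < σs a := by
    intro σ hσ a ha
    by_contra hcon
    have hsa : σs a = 0 := le_antisymm (not_lt.1 hcon) (hspos a)
    have hpos : ∀ b, 0 ≤ σ b := (hS hσ).1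
    set M := shannonEntropy σs - shannonEntropy σ with hM
    have hM0 : 0 ≤ M := by have := hmax σ hσ; linarith
    set t := Real.exp (-(M + 1) / σ a) with htdef
    have ht0 : 0 < t := Real.exp_pos _
    have ht1 : t < 1 := by
      rw [htdef, Real.exp_lt_one_iff]
      exact div_neg_of_neg_of_pos (by linarith) ha
    have hlogt : Real.log t = -(M + 1) / σ a := Real.log_exp _
    set σt : A → ℝ := fun b => (1 - t) * σs b + t * σ b with hσt
    have hσtS : σt ∈ S := by
      have h := hconv hσs hσ (by linarith : (0:ℝ) ≤ 1 - t) ht0.le (by ring)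
      have he : σt = (1 - t) • σs + t • σ := by funext b; simp [hσt]
      rw [he]; exact h
    have hineq := hmax σt hσtS
    have hsplit : ∀ τ : A → ℝ, ∑ b, Real.negMulLog (τ b)
        = Real.negMulLog (τ a) + ∑ b ∈ univ.erase a, Real.negMulLog (τ b) :=
      fun τ => (Finset.add_sum_erase univ _ (mem_univ a)).symm
    have hcc : ∀ b, (1 - t) * Real.negMulLog (σs b) + t * Real.negMulLog (σ b)
        ≤ Real.negMulLog (σt b) := by
      intro b
      have := Real.concaveOn_negMulLog.2 (Set.mem_Ici.2 (hspos b)) (Set.mem_Ici.2 (hpos b))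
        (by linarith : (0:ℝ) ≤ 1 - t) ht0.le (by ring)
      simpa [smul_eq_mul, hσt] using this
    have hsuml : ∑ b ∈ univ.erase a, ((1 - t) * Real.negMulLog (σs b) + t * Real.negMulLog (σ b))
        ≤ ∑ b ∈ univ.erase a, Real.negMulLog (σt b) :=
      Finset.sum_le_sum fun b _ => hcc b
    have hta : σt a = t * σ a := by simp [hσt, hsa]
    have hna : Real.negMulLog (σt a) = -(t * σ a) * (Real.log t + Real.log (σ a)) := by
      rw [hta, Real.negMulLog, Real.log_mul ht0.ne' ha.ne']
    have e1 : ∑ b ∈ univ.erase a, Real.negMulLog (σs b) = shannonEntropy σs := by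
      rw [hent σs, hsplit σs, hsa]
      simp [Real.negMulLog]
    have e2 : ∑ b ∈ univ.erase a, Real.negMulLog (σ b)
        = shannonEntropy σ + σ a * Real.log (σ a) := by
      rw [hent σ, hsplit σ]
      simp only [Real.negMulLog]
      ring
    have hHt : shannonEntropy σt
        = Real.negMulLog (σt a) + ∑ b ∈ univ.erase a, Real.negMulLog (σt b) := by
      rw [hent σt, hsplit σt]
    rw [hHt, hna] at hineq
    rw [Finset.sum_add_distrib, ← Finset.mul_sum, ← Finset.mul_sum, e1, e2] at hsuml
    have hlt : -(σ a) * Real.log t = M + 1 := by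
      rw [hlogt]; field_simp
    nlinarith [hineq, hsuml, ht0, hM0, ha]
  -- Step 2: first-order optimality: cross-entropy against σs is at most H(σs)
  have hmain : ∀ σ ∈ S, -∑ a, σ a * Real.log (σs a) ≤ shannonEntropy σs := by
    intro σ hσ
    have hpos : ∀ b, 0 ≤ σ b := (hS hσ).1
    have hsum1 : ∑ b, σ b = 1 := (hS hσ).2
    have hzero : ∀ b, σs b = 0 → σ b = 0 := by
      intro b hb
      by_contra hc
      exact (hsupp σ hσ b (lt_of_le_of_ne (hpos b) (Ne.symm hc))).ne' hb
    set L : ℝ := ∑ b, (σs b - σ b) * Real.log (σs b) with hL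
    set C : ℝ := ∑ b, (if 0 < σs b then (σ b - σs b) ^ 2 / σs b else 0) with hC
    have hC0 : 0 ≤ C := by
      apply Finset.sum_nonneg
      intro b _
      split_ifs with hb
      · positivity
      · exact le_refl 0
    have hstep : ∀ t : ℝ, 0 < t → t ≤ 1 → L ≤ t * C := by
      intro t ht0 ht1
      set σt : A → ℝ := fun b => (1 - t) * σs b + t * σ b with hσt
      have hσtS : σt ∈ S := by
        have h := hconv hσs hσ (by linarith : (0:ℝ) ≤ 1 - t) ht0.le (by ring)
        have he : σt = (1 - t) • σs + t • σ := by funext b; simp [hσt]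
        rw [he]; exact h
      have hineq := hmax σt hσtS
      have hterm : ∀ b, σt b * Real.log (σt b) - σs b * Real.log (σs b)
          ≤ t * ((σ b - σs b) * (Real.log (σs b) + 1))
            + t ^ 2 * (if 0 < σs b then (σ b - σs b) ^ 2 / σs b else 0) := by
        intro b
        by_cases hb : 0 < σs b
        · have hxh : 0 ≤ σs b + t * (σ b - σs b) := by nlinarith [hpos b, hspos b]
          have h1 := key_pointwise (σs b) (t * (σ b - σs b)) hb hxh
          have he : σs b + t * (σ b - σs b) = σt b := by simp [hσt]; ring
          rw [he] at h1
          rw [if_pos hb]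
          have hdiv : (t * (σ b - σs b)) ^ 2 / σs b
              = t ^ 2 * ((σ b - σs b) ^ 2 / σs b) := by
            field_simp
          nlinarith [h1]
        · have hb0 : σs b = 0 := le_antisymm (not_lt.1 hb) (hspos b)
          have hσb : σ b = 0 := hzero b hb0
          simp [if_neg hb, hσt, hb0, hσb]
      have hsum := Finset.sum_le_sum (fun b (_ : b ∈ univ) => hterm b)
      rw [Finset.sum_sub_distrib, Finset.sum_add_distrib, ← Finset.mul_sum,
        ← Finset.mul_sum] at hsum
      have e3 : ∑ b, (σ b - σs b) * (Real.log (σs b) + 1) = -L := by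
        have hco : ∀ b, (σ b - σs b) * (Real.log (σs b) + 1)
            = -((σs b - σ b) * Real.log (σs b)) + (σ b - σs b) := fun b => by ring
        rw [Finset.sum_congr rfl fun b _ => hco b, Finset.sum_add_distrib,
          Finset.sum_neg_distrib, Finset.sum_sub_distrib, hsum1, hssum, hL]
        ring
      rw [e3] at hsum
      have hHH : ∑ b, σs b * Real.log (σs b) ≤ ∑ b, σt b * Real.log (σt b) := by
        simp only [shannonEntropy] at hineq
        linarith
      nlinarith [hsum, hHH, ht0, mul_pos ht0 ht0]
    have hL0 : L ≤ 0 := by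
      by_contra hc
      push_neg at hc
      have htpos : 0 < min 1 (L / (2 * C + 1)) :=
        lt_min one_pos (div_pos hc (by linarith))
      have ht := hstep _ htpos (min_le_left _ _)
      have h1 : min 1 (L / (2 * C + 1)) ≤ L / (2 * C + 1) := min_le_right _ _
      have h2 : min 1 (L / (2 * C + 1)) * C ≤ L / (2 * C + 1) * C :=
        mul_le_mul_of_nonneg_right h1 hC0
      have h4 := mul_le_mul_of_nonneg_right (le_trans ht h2)
        (by linarith : (0:ℝ) ≤ 2 * C + 1)
      have h3 : L / (2 * C + 1) * C * (2 * C + 1) = L * C := by field_simp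
      rw [h3] at h4
      nlinarith [mul_nonneg hc.le hC0]
    have hLe : L = ∑ b, σs b * Real.log (σs b) - ∑ b, σ b * Real.log (σs b) := by
      rw [hL, ← Finset.sum_sub_distrib]
      exact Finset.sum_congr rfl fun b _ => by ring
    simp only [shannonEntropy]
    linarith
  -- Step 3: assemble
  have heq : (⨆ σ ∈ S, logLoss σ σs) = ((shannonEntropy σs : ℝ) : EReal) := by
    apply le_antisymm
    · apply iSup₂_le
      intro σ hσ
      rw [logLoss, if_neg]
      · exact EReal.coe_le_coe_iff.2 (hmain σ hσ)
      · rintro ⟨a, h1, h2⟩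
        exact (hsupp σ hσ a h1).ne' h2
    · have hls : logLoss σs σs = ((shannonEntropy σs : ℝ) : EReal) := by
        rw [logLoss, if_neg]
        · rfl
        · rintro ⟨a, h1, h2⟩
          exact h1.ne' h2
      calc ((shannonEntropy σs : ℝ) : EReal) = logLoss σs σs := hls.symm
        _ ≤ _ := le_iSup₂ (f := fun σ _ => logLoss σ σs) σs hσs
  refine ⟨?_, heq⟩
  intro σh hσh
  rw [heq]
  refine le_trans ?_ (le_iSup₂ (f := fun σ _ => logLoss σ σh) σs hσs)
  rw [logLoss]
  split_ifs with h
  · exact le_top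
  · push_neg at h
    apply EReal.coe_le_coe_iff.2
    exact gibbs σs σh hspos hssum hσh.1 hσh.2
      (fun a ha => lt_of_le_of_ne (hσh.1 a) (Ne.symm (h a ha)))
end

section
/- Fix a finite nonempty index set Φ, a nonempty finite outcome set A, a natural number K ≥ 1, for every f ∈ Φ a matrix R^f ∈ ℝ^{A×K} with rows r^f(a), and Δ > 0 such that |r^f(a)_k| ≤ Δ for all f, a, k. Let ε > 0 and δ ∈ (0,1). Let a_1,…,a_M be i.i.d. samples from σ ∈ Δ(A) with M ≥ (2/ε²)·log(2|Φ|K/δ), and let σ̃ be their empirical distribution. Then with probability at least 1−δ, for every w ∈ ℝ^K, Regret^Φ(σ̃,w) ≤ Regret^Φ(σ,w) + εΔ‖w‖₁. -/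
open Finset MeasureTheory


/-- Hoeffding's lemma core inequality for a two-point distribution. -/
lemma hoeff_core {p : ℝ} (hp0 : 0 ≤ p) (hp1 : p ≤ 1) (u : ℝ) :
    (1 - p) * Real.exp (-p * u) + p * Real.exp ((1 - p) * u) ≤ Real.exp (u ^ 2 / 8) := by
  rcases eq_or_lt_of_le hp0 with h0 | h0
  · simp [← h0]; positivity
  rcases eq_or_lt_of_le hp1 with h1 | h1
  · simp [h1]; positivity
  -- now 0 < p < 1
  set q : ℝ := 1 - p with hq
  clear_value q
  have hq0 : 0 < q := by rw [hq]; linarith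
  set h : ℝ → ℝ := fun x => q + p * Real.exp x with hh
  have hpos : ∀ x, 0 < h x := fun x => by
    have := Real.exp_pos x; simp only [hh]; nlinarith
  set g : ℝ → ℝ := fun x => -p * x + Real.log (h x) with hg
  set g' : ℝ → ℝ := fun x => -p + p * Real.exp x / h x with hg'
  set g'' : ℝ → ℝ := fun x => p * q * Real.exp x / (h x) ^ 2 with hg''
  have hder1 : ∀ x, HasDerivAt g (g' x) x := by
    intro x
    have hd : HasDerivAt h (p * Real.exp x) x := by
      exact ((Real.hasDerivAt_exp x).const_mul p).const_add q
    have := (hd.log (hpos x).ne')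
    simpa [hg, hg', Pi.add_def] using ((hasDerivAt_id x).const_mul (-p)).add this
  have hder2 : ∀ x, HasDerivAt g' (g'' x) x := by
    intro x
    have hd : HasDerivAt h (p * Real.exp x) x := by
      exact ((Real.hasDerivAt_exp x).const_mul p).const_add q
    have hnum : HasDerivAt (fun x => p * Real.exp x) (p * Real.exp x) x :=
      (Real.hasDerivAt_exp x).const_mul p
    have := hnum.div hd (hpos x).ne'
    have heq : (p * Real.exp x * h x - p * Real.exp x * (p * Real.exp x)) / (h x) ^ 2 = g'' x := by
      simp only [hg'', hh]; ring
    simpa [hg', heq] using (this.const_add (-p))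
  have hg''le : ∀ x, g'' x ≤ 1 / 4 := by
    intro x
    have hx := Real.exp_pos x
    have hsq : (0:ℝ) < (h x) ^ 2 := pow_pos (hpos x) 2
    rw [hg'', div_le_iff₀ hsq]
    have key : 0 ≤ (q - p * Real.exp x) ^ 2 := sq_nonneg _
    simp only [hh]
    nlinarith [key]
  set D : ℝ → ℝ := fun x => x ^ 2 / 8 - g x with hD
  set D' : ℝ → ℝ := fun x => x / 4 - g' x with hD'
  have hDd : ∀ x, HasDerivAt D (D' x) x := fun x => by
    have h1 : HasDerivAt (fun x : ℝ => x ^ 2 / 8) (x / 4) x := by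
      have h2 := (hasDerivAt_pow 2 x).div_const 8
      exact h2.congr_deriv (by push_cast; ring)
    simpa [hD, hD', Pi.sub_def] using h1.sub (hder1 x)
  have hD'd : ∀ x, HasDerivAt D' (1 / 4 - g'' x) x := fun x => by
    have h1 : HasDerivAt (fun x : ℝ => x / 4) (1 / 4) x := (hasDerivAt_id x).div_const 4
    simpa [hD', Pi.sub_def] using h1.sub (hder2 x)
  have hD'mono : Monotone D' := by
    apply monotone_of_deriv_nonneg
    · exact fun x => (hD'd x).differentiableAt
    · intro x
      rw [(hD'd x).deriv]
      linarith [hg''le x]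
  have hD'0 : D' 0 = 0 := by
    simp [hD', hg', hh, hq]
  have hg0 : g 0 = 0 := by simp [hg, hh, hq]
  have hD0 : D 0 = 0 := by simp [hD, hg0]
  have hDnonneg : ∀ x, 0 ≤ D x := by
    intro x
    rcases le_total 0 x with hx | hx
    · have hm : MonotoneOn D (Set.Ici 0) := by
        apply monotoneOn_of_deriv_nonneg (convex_Ici 0)
        · exact fun y _ => (hDd y).differentiableAt.continuousAt.continuousWithinAt
        · exact fun y _ => (hDd y).differentiableAt.differentiableWithinAt
        · intro y hy
          rw [(hDd y).deriv]
          have hy0 : (0:ℝ) ≤ y := le_of_lt (by simpa [interior_Ici] using hy)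
          have := hD'mono hy0
          rw [hD'0] at this; linarith
      have := hm (Set.self_mem_Ici) (Set.mem_Ici.mpr hx) hx
      rw [hD0] at this; exact this
    · have hm : AntitoneOn D (Set.Iic 0) := by
        apply antitoneOn_of_deriv_nonpos (convex_Iic 0)
        · exact fun y _ => (hDd y).differentiableAt.continuousAt.continuousWithinAt
        · exact fun y _ => (hDd y).differentiableAt.differentiableWithinAt
        · intro y hy
          rw [(hDd y).deriv]
          have hy0 : y ≤ (0:ℝ) := le_of_lt (by simpa [interior_Iic] using hy)
          have := hD'mono hy0
          rw [hD'0] at this; linarith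
      have := hm (Set.mem_Iic.mpr hx) (Set.self_mem_Iic) hx
      rw [hD0] at this; exact this
  have key : g u ≤ u ^ 2 / 8 := by
    have := hDnonneg u; simp only [hD] at this; linarith
  have lhs_eq : (1 - p) * Real.exp (-p * u) + p * Real.exp ((1 - p) * u) = Real.exp (g u) := by
    have h1 : Real.exp ((1 - p) * u) = Real.exp u * Real.exp (-p * u) := by
      rw [← Real.exp_add]; ring_nf
    have hpu := hpos u
    simp only [hh, hq] at hpu
    simp only [hg, hh, hq]
    rw [Real.exp_add, Real.exp_log hpu, h1]
    ring
  rw [hq, lhs_eq]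
  exact Real.exp_le_exp.mpr key


/-- Hoeffding's lemma (mgf bound) for a finitely supported centered distribution. -/
lemma hoeff_mgf {A : Type*} [Fintype A] (ν : A → ℝ) (hν0 : ∀ a, 0 ≤ ν a)
    (hν1 : ∑ a, ν a = 1) (X : A → ℝ) (lo hi : ℝ)
    (hlo : ∀ a, lo ≤ X a) (hhi : ∀ a, X a ≤ hi)
    (hmean : ∑ a, ν a * X a = 0) (t : ℝ) :
    ∑ a, ν a * Real.exp (t * X a) ≤ Real.exp (t ^ 2 * (hi - lo) ^ 2 / 8) := by
  have hlo0 : lo ≤ 0 := by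
    calc lo = ∑ a, ν a * lo := by rw [← Finset.sum_mul, hν1, one_mul]
    _ ≤ ∑ a, ν a * X a := Finset.sum_le_sum fun a _ => mul_le_mul_of_nonneg_left (hlo a) (hν0 a)
    _ = 0 := hmean
  have hhi0 : 0 ≤ hi := by
    calc (0:ℝ) = ∑ a, ν a * X a := hmean.symm
    _ ≤ ∑ a, ν a * hi := Finset.sum_le_sum fun a _ => mul_le_mul_of_nonneg_left (hhi a) (hν0 a)
    _ = hi := by rw [← Finset.sum_mul, hν1, one_mul]
  rcases eq_or_lt_of_le (le_trans hlo0 hhi0) with heq | hlt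
  · -- lo = hi = 0, so X = 0
    have hlo' : lo = 0 := by linarith
    have hhi' : hi = 0 := by linarith
    have hX : ∀ a, X a = 0 := fun a => le_antisymm (hhi' ▸ hhi a) (hlo' ▸ hlo a)
    simp only [hX, mul_zero, Real.exp_zero, mul_one, hν1]
    have : (0:ℝ) ≤ t ^ 2 * (hi - lo) ^ 2 / 8 := by positivity
    exact Real.one_le_exp this
  · set c : ℝ := hi - lo with hc
    clear_value c
    have hc0 : 0 < c := by rw [hc]; linarith
    set p : ℝ := -lo / c with hp
    clear_value p
    have hp0 : 0 ≤ p := by rw [hp]; apply div_nonneg (by linarith) hc0.le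
    have hp1 : p ≤ 1 := by rw [hp, div_le_one hc0, hc]; linarith
    have hlop : lo = -p * c := by rw [hp]; field_simp
    have hne : hi - lo ≠ 0 := by linarith
    have hhip : hi = (1 - p) * c := by rw [hp, hc]; field_simp; ring
    -- chord bound for each a
    have chord : ∀ a, Real.exp (t * X a) ≤
        ((hi - X a) / c) * Real.exp (t * lo) + ((X a - lo) / c) * Real.exp (t * hi) := by
      intro a
      have hl1 : 0 ≤ (hi - X a) / c := div_nonneg (by linarith [hhi a]) hc0.le
      have hl2 : 0 ≤ (X a - lo) / c := div_nonneg (by linarith [hlo a]) hc0.le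
      have hl3 : (hi - X a) / c + (X a - lo) / c = 1 := by
        rw [← add_div, hc, div_eq_one_iff_eq hne]; ring
      have := convexOn_exp.2 (Set.mem_univ (t * lo)) (Set.mem_univ (t * hi)) hl1 hl2 hl3
      have harg : ((hi - X a) / c) • (t * lo) + ((X a - lo) / c) • (t * hi) = t * X a := by
        simp only [smul_eq_mul]
        field_simp
        rw [hc]; ring
      rw [harg] at this
      simpa using this
    calc ∑ a, ν a * Real.exp (t * X a)
        ≤ ∑ a, ν a * (((hi - X a) / c) * Real.exp (t * lo) +
            ((X a - lo) / c) * Real.exp (t * hi)) :=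
          Finset.sum_le_sum fun a _ => mul_le_mul_of_nonneg_left (chord a) (hν0 a)
    _ = (1 - p) * Real.exp (t * lo) + p * Real.exp (t * hi) := by
        have e1 : ∑ a, ν a * ((hi - X a) / c) = 1 - p := by
          have : ∑ a, ν a * ((hi - X a) / c) = ((∑ a, ν a * hi) - ∑ a, ν a * X a) / c := by
            rw [← Finset.sum_sub_distrib, Finset.sum_div]
            exact Finset.sum_congr rfl fun a _ => by ring
          rw [this, hmean, ← Finset.sum_mul, hν1, one_mul, hp, hc]
          field_simp
          ring
        have e2 : ∑ a, ν a * ((X a - lo) / c) = p := by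
          have : ∑ a, ν a * ((X a - lo) / c) = ((∑ a, ν a * X a) - ∑ a, ν a * lo) / c := by
            rw [← Finset.sum_sub_distrib, Finset.sum_div]
            exact Finset.sum_congr rfl fun a _ => by ring
          rw [this, hmean, ← Finset.sum_mul, hν1, one_mul, hp]
          ring
        calc ∑ a, ν a * (((hi - X a) / c) * Real.exp (t * lo) +
              ((X a - lo) / c) * Real.exp (t * hi))
            = (∑ a, ν a * ((hi - X a) / c)) * Real.exp (t * lo) +
              (∑ a, ν a * ((X a - lo) / c)) * Real.exp (t * hi) := by
              simp only [Finset.sum_mul]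
              rw [← Finset.sum_add_distrib]
              exact Finset.sum_congr rfl fun a _ => by ring
        _ = (1 - p) * Real.exp (t * lo) + p * Real.exp (t * hi) := by rw [e1, e2]
    _ = (1 - p) * Real.exp (-p * (t * c)) + p * Real.exp ((1 - p) * (t * c)) := by
        rw [hlop, hhip]; ring_nf
    _ ≤ Real.exp ((t * c) ^ 2 / 8) := hoeff_core hp0 hp1 (t * c)
    _ = Real.exp (t ^ 2 * c ^ 2 / 8) := by ring_nf

/-- One-sided Chernoff bound for sums of i.i.d. bounded centered finite random variables. -/
lemma chernoff_tail {A : Type*} [Fintype A] [Nonempty A] [DecidableEq A] {M : ℕ}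
    (ν : A → ℝ) (hν0 : ∀ a, 0 ≤ ν a) (hν1 : ∑ a, ν a = 1)
    (X : A → ℝ) (Δ : ℝ) (hΔ : 0 < Δ) (lo hi : ℝ)
    (hlo : ∀ a, lo ≤ X a) (hhi : ∀ a, X a ≤ hi) (hrange : hi - lo ≤ 2 * Δ)
    (hmean : ∑ a, ν a * X a = 0) (θ : ℝ) (hθ : 0 < θ) :
    ∑ ω ∈ univ.filter (fun ω : Fin M → A => (M : ℝ) * θ < ∑ m, X (ω m)), ∏ m, ν (ω m)
      ≤ Real.exp (-(M : ℝ) * θ ^ 2 / (2 * Δ ^ 2)) := by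
  set t : ℝ := θ / Δ ^ 2 with ht
  have ht0 : 0 < t := by rw [ht]; positivity
  have hrange0 : 0 ≤ hi - lo := by
    have a : A := Classical.arbitrary A
    linarith [hlo a, hhi a]
  -- mgf bound
  have hmgf : ∑ a, ν a * Real.exp (t * X a) ≤ Real.exp (t ^ 2 * Δ ^ 2 / 2) := by
    refine le_trans (hoeff_mgf ν hν0 hν1 X lo hi hlo hhi hmean t) (Real.exp_le_exp.mpr ?_)
    have h1 : (hi - lo) ^ 2 ≤ (2 * Δ) ^ 2 := by nlinarith
    nlinarith [sq_nonneg t]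
  have hmgf0 : 0 ≤ ∑ a, ν a * Real.exp (t * X a) := by
    apply Finset.sum_nonneg
    exact fun a _ => mul_nonneg (hν0 a) (Real.exp_pos _).le
  -- step 1: indicator bound
  have step1 : ∑ ω ∈ univ.filter (fun ω : Fin M → A => (M : ℝ) * θ < ∑ m, X (ω m)), ∏ m, ν (ω m)
      ≤ Real.exp (-(t * M * θ)) * ∑ ω : Fin M → A, (∏ m, ν (ω m)) * Real.exp (t * ∑ m, X (ω m)) := by
    rw [Finset.mul_sum]
    refine le_trans (Finset.sum_le_sum ?_) (Finset.sum_le_sum_of_subset_of_nonneg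
      (Finset.filter_subset _ _) ?_)
    · intro ω hω
      rw [Finset.mem_filter] at hω
      have h1 : (1:ℝ) ≤ Real.exp (-(t * M * θ)) * Real.exp (t * ∑ m, X (ω m)) := by
        rw [← Real.exp_add, ← Real.exp_zero]
        apply Real.exp_le_exp.mpr
        have := hω.2
        nlinarith [this, ht0]
      have hW : 0 ≤ ∏ m, ν (ω m) := Finset.prod_nonneg fun m _ => hν0 _
      calc ∏ m, ν (ω m) = (∏ m, ν (ω m)) * 1 := by ring
      _ ≤ (∏ m, ν (ω m)) * (Real.exp (-(t * M * θ)) * Real.exp (t * ∑ m, X (ω m))) :=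
          mul_le_mul_of_nonneg_left h1 hW
      _ = Real.exp (-(t * M * θ)) * ((∏ m, ν (ω m)) * Real.exp (t * ∑ m, X (ω m))) := by ring
    · intro ω _ _
      exact mul_nonneg (Real.exp_pos _).le (mul_nonneg (Finset.prod_nonneg fun m _ => hν0 _) (Real.exp_pos _).le)
  -- step 2: factorize
  have step2 : ∑ ω : Fin M → A, (∏ m, ν (ω m)) * Real.exp (t * ∑ m, X (ω m))
      = (∑ a, ν a * Real.exp (t * X a)) ^ M := by
    have : ∀ ω : Fin M → A, (∏ m, ν (ω m)) * Real.exp (t * ∑ m, X (ω m))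
        = ∏ m, (ν (ω m) * Real.exp (t * X (ω m))) := by
      intro ω
      rw [Finset.mul_sum, Real.exp_sum, Finset.prod_mul_distrib]
    simp_rw [this]
    rw [← Fintype.piFinset_univ, ← Finset.prod_univ_sum (fun _ : Fin M => (univ : Finset A))
      (fun _ a => ν a * Real.exp (t * X a))]
    rw [Finset.prod_const, Finset.card_univ, Fintype.card_fin]
  calc ∑ ω ∈ univ.filter (fun ω : Fin M → A => (M : ℝ) * θ < ∑ m, X (ω m)), ∏ m, ν (ω m)
      ≤ Real.exp (-(t * M * θ)) * (∑ a, ν a * Real.exp (t * X a)) ^ M := by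
        rw [← step2]; exact step1
  _ ≤ Real.exp (-(t * M * θ)) * (Real.exp (t ^ 2 * Δ ^ 2 / 2)) ^ M :=
      mul_le_mul_of_nonneg_left (pow_le_pow_left₀ hmgf0 hmgf M) (Real.exp_pos _).le
  _ = Real.exp (-(t * M * θ) + M * (t ^ 2 * Δ ^ 2 / 2)) := by
      rw [← Real.exp_nat_mul, ← Real.exp_add]
  _ = Real.exp (-(M : ℝ) * θ ^ 2 / (2 * Δ ^ 2)) := by
      congr 1
      rw [ht]
      field_simp
      ring

/-- Union bound for finite sums of nonnegative reals. -/
lemma sum_biUnion_le' {ι β : Type*} [DecidableEq β] (s : Finset ι) (B : ι → Finset β)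
    (f : β → ℝ) (hf : ∀ b, 0 ≤ f b) :
    ∑ b ∈ s.biUnion B, f b ≤ ∑ i ∈ s, ∑ b ∈ B i, f b := by
  classical
  induction s using Finset.induction_on with
  | empty => simp
  | insert a s' h ih =>
    rw [Finset.biUnion_insert, Finset.sum_insert h]
    have h1 := Finset.sum_union_inter (s₁ := B a) (s₂ := s'.biUnion B) (f := f)
    have h2 : 0 ≤ ∑ b ∈ (B a ∩ s'.biUnion B), f b := Finset.sum_nonneg fun b _ => hf b
    have h3 : ∑ b ∈ (B a ∪ s'.biUnion B), f b ≤ ∑ b ∈ B a, f b + ∑ b ∈ s'.biUnion B, f b := by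
      linarith
    exact le_trans h3 (by linarith [ih])

/-- The measure of the set of all points of a finite measurable space with measurable
singletons. -/
lemma sum_meas_singleton {A : Type*} [Fintype A] [MeasurableSpace A]
    [MeasurableSingletonClass A] (μ : Measure A) : ∑ a : A, μ {a} = μ Set.univ := by
  classical
  have h : (Set.univ : Set A) = ⋃ a ∈ (univ : Finset A), ({a} : Set A) := by
    ext x; simp
  rw [h, measure_biUnion_finset ?_ fun b _ => measurableSet_singleton b]
  intro x _ y _ hxy
  exact Set.disjoint_singleton.mpr hxy

/-- Any event of a finite product of finite discrete probability spaces has measure given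
by a finite sum of products of point masses. -/
lemma pi_meas_eq {A : Type*} [Fintype A] [MeasurableSpace A] [MeasurableSingletonClass A]
    (μ : Measure A) [IsProbabilityMeasure μ] {M : ℕ}
    (P : (Fin M → A) → Prop) [DecidablePred P] :
    (Measure.pi fun _ : Fin M => μ) {ω | P ω}
      = ENNReal.ofReal (∑ ω ∈ univ.filter P, ∏ m, (μ {ω m}).toReal) := by
  classical
  have hsingle : ∀ ω : Fin M → A, ({ω} : Set (Fin M → A)) = Set.univ.pi (fun m => {ω m}) := by
    intro ω; ext x
    simp [Set.mem_pi, funext_iff]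
  have hS : {ω | P ω} = ⋃ ω ∈ univ.filter P, ({ω} : Set (Fin M → A)) := by
    ext x; simp
  rw [hS, measure_biUnion_finset ?_ ?_]
  · rw [ENNReal.ofReal_sum_of_nonneg
      (fun ω _ => Finset.prod_nonneg fun m _ => ENNReal.toReal_nonneg)]
    refine Finset.sum_congr rfl fun ω _ => ?_
    rw [hsingle, Measure.pi_pi, ENNReal.ofReal_prod_of_nonneg
      (fun m _ => ENNReal.toReal_nonneg)]
    exact Finset.prod_congr rfl fun m _ => (ENNReal.ofReal_toReal (measure_ne_top μ _)).symm
  · intro x _ y _ hxy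
    exact Set.disjoint_singleton.mpr hxy
  · intro ω _
    rw [hsingle]
    exact MeasurableSet.univ_pi fun m => measurableSet_singleton _


set_option maxHeartbeats 2000000 in
/-- **Theorem 2 (sample complexity for regret).**
Let `μ` be a probability distribution on the finite outcome set `A` (with point
masses `σ_a = μ {a}`), and let `ω : Fin M → A` be `M` i.i.d. samples from `μ`,
with `M ≥ (2/ε²)·log(2|Φ|K/δ)`, and let `σ̃` be the empirical distribution of
the samples. Then with probability at least `1 − δ`, for every utility weight
vector `w`, `Regret^Φ(σ̃,w) ≤ Regret^Φ(σ,w) + εΔ‖w‖₁`. -/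
theorem empirical_regret_close_whp
    {Φ A : Type*} [Fintype Φ] [Nonempty Φ] [Fintype A] [Nonempty A] [DecidableEq A]
    [MeasurableSpace A] [MeasurableSingletonClass A]
    {K : ℕ} (hK : 1 ≤ K) (R : Φ → A → Fin K → ℝ)
    (Δ : ℝ) (hΔ : 0 < Δ) (hbound : ∀ f a k, |R f a k| ≤ Δ)
    (μ : Measure A) [IsProbabilityMeasure μ]
    (ε δ : ℝ) (hε : 0 < ε) (hδ0 : 0 < δ) (hδ1 : δ < 1)
    (M : ℕ) (hM : (2 / ε ^ 2) * Real.log (2 * (Fintype.card Φ) * K / δ) ≤ M) :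
    ENNReal.ofReal (1 - δ) ≤
      (Measure.pi fun _ : Fin M => μ)
        {ω : Fin M → A | ∀ w : Fin K → ℝ,
          univ.sup' univ_nonempty
              (fun f : Φ =>
                ∑ a, ((univ.filter fun m => ω m = a).card : ℝ) / M *
                  ∑ k, R f a k * w k) ≤
            univ.sup' univ_nonempty
                (fun f : Φ => ∑ a, (μ {a}).toReal * ∑ k, R f a k * w k) +
              ε * Δ * ∑ k, |w k|} := by
  classical
  -- the point masses
  set ν : A → ℝ := fun a => (μ {a}).toReal with hνdef
  have hν0 : ∀ a, 0 ≤ ν a := fun a => ENNReal.toReal_nonneg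
  have hν1 : ∑ a, ν a = 1 := by
    rw [hνdef, ← ENNReal.toReal_sum (fun a _ => measure_ne_top μ _), sum_meas_singleton]
    simp
  -- numerology
  have hcard : (1:ℝ) ≤ (Fintype.card Φ : ℝ) := by exact_mod_cast Fintype.card_pos
  have hKr : (1:ℝ) ≤ (K : ℝ) := by exact_mod_cast hK
  have hratio : 1 < 2 * (Fintype.card Φ : ℝ) * K / δ := by
    rw [lt_div_iff₀ hδ0]; nlinarith
  have hL0 : 0 < Real.log (2 * (Fintype.card Φ : ℝ) * K / δ) := Real.log_pos hratio
  have hM0 : 0 < (M:ℝ) := lt_of_lt_of_le (by positivity) hM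
  have hMε : Real.log (2 * (Fintype.card Φ : ℝ) * K / δ) ≤ (M:ℝ) * ε ^ 2 / 2 := by
    have h2 : (0:ℝ) < ε ^ 2 := by positivity
    calc Real.log (2 * (Fintype.card Φ : ℝ) * K / δ)
        = (2 / ε ^ 2) * Real.log (2 * (Fintype.card Φ : ℝ) * K / δ) * (ε ^ 2 / 2) := by
          field_simp
    _ ≤ (M:ℝ) * (ε ^ 2 / 2) := mul_le_mul_of_nonneg_right hM (by positivity)
    _ = (M:ℝ) * ε ^ 2 / 2 := by ring
  have hexp : Real.exp (-(M:ℝ) * ε ^ 2 / 2) ≤ δ / (2 * (Fintype.card Φ : ℝ) * K) := by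
    have h1 : Real.exp (-(M:ℝ) * ε ^ 2 / 2)
        ≤ Real.exp (-(Real.log (2 * (Fintype.card Φ : ℝ) * K / δ))) :=
      Real.exp_le_exp.mpr (by linarith)
    have h2 : Real.exp (-(Real.log (2 * (Fintype.card Φ : ℝ) * K / δ)))
        = δ / (2 * (Fintype.card Φ : ℝ) * K) := by
      rw [Real.exp_neg, Real.exp_log (by positivity), inv_div]
    linarith [h1, h2.le, h2.ge]
  -- the means
  set mn : Φ → Fin K → ℝ := fun f k => ∑ a, ν a * R f a k with hmn
  have hmnbd : ∀ f k, |mn f k| ≤ Δ := by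
    intro f k
    rw [hmn]
    calc |∑ a, ν a * R f a k| ≤ ∑ a, |ν a * R f a k| := Finset.abs_sum_le_sum_abs _ _
    _ ≤ ∑ a, ν a * Δ := Finset.sum_le_sum fun a _ => by
        rw [abs_mul, abs_of_nonneg (hν0 a)]
        exact mul_le_mul_of_nonneg_left (hbound f a k) (hν0 a)
    _ = Δ := by rw [← Finset.sum_mul, hν1, one_mul]
  set θ : ℝ := ε * Δ with hθdef
  have hθ0 : 0 < θ := by rw [hθdef]; positivity
  -- the good event
  set E : (Fin M → A) → Prop := fun ω => ∀ (f : Φ) (k : Fin K),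
    |(∑ m, R f (ω m) k) - M * mn f k| ≤ M * θ with hE
  -- weights
  set W : (Fin M → A) → ℝ := fun ω => ∏ m, ν (ω m) with hWdef
  have hW0 : ∀ ω, 0 ≤ W ω := fun ω => Finset.prod_nonneg fun m _ => hν0 _
  -- deterministic part : E implies the regret bound
  have hdet : ∀ ω : Fin M → A, E ω → ∀ w : Fin K → ℝ,
      univ.sup' univ_nonempty
          (fun f : Φ => ∑ a, ((univ.filter fun m => ω m = a).card : ℝ) / M *
            ∑ k, R f a k * w k) ≤
        univ.sup' univ_nonempty
            (fun f : Φ => ∑ a, (μ {a}).toReal * ∑ k, R f a k * w k) + θ * ∑ k, |w k| := by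
    intro ω hEω w
    apply Finset.sup'_le
    intro f _
    have hcount : ∀ F : A → ℝ,
        ∑ a, ((univ.filter fun m => ω m = a).card : ℝ) * F a = ∑ m, F (ω m) := by
      intro F
      conv_rhs => rw [← Finset.sum_fiberwise univ (fun m => ω m) (fun m => F (ω m))]
      refine Finset.sum_congr rfl fun a _ => ?_
      rw [Finset.sum_congr rfl (fun m hm => by rw [(Finset.mem_filter.mp hm).2]),
        Finset.sum_const, nsmul_eq_mul]
    have hre : ∑ a, ((univ.filter fun m => ω m = a).card : ℝ) / M * ∑ k, R f a k * w k
        = ∑ k, ((∑ m, R f (ω m) k) / M) * w k := by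
      calc ∑ a, ((univ.filter fun m => ω m = a).card : ℝ) / M * ∑ k, R f a k * w k
          = (∑ a, ((univ.filter fun m => ω m = a).card : ℝ) * ∑ k, R f a k * w k) / M := by
            rw [Finset.sum_div]; exact Finset.sum_congr rfl fun a _ => by ring
      _ = (∑ m, ∑ k, R f (ω m) k * w k) / M := by rw [hcount]
      _ = (∑ k, (∑ m, R f (ω m) k) * w k) / M := by
            rw [Finset.sum_comm]
            congr 1
            exact Finset.sum_congr rfl fun k _ => by rw [Finset.sum_mul]
      _ = ∑ k, ((∑ m, R f (ω m) k) / M) * w k := by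
            rw [Finset.sum_div]; exact Finset.sum_congr rfl fun k _ => by ring
    rw [hre]
    have hstep : ∀ k, ((∑ m, R f (ω m) k) / M) * w k ≤ mn f k * w k + θ * |w k| := by
      intro k
      have h1 := hEω f k
      have h2 : |(∑ m, R f (ω m) k) / M - mn f k| ≤ θ := by
        have heq : (∑ m, R f (ω m) k) / M - mn f k
            = ((∑ m, R f (ω m) k) - M * mn f k) / M := by field_simp
        rw [heq, abs_div, abs_of_pos hM0, div_le_iff₀ hM0]
        linarith [h1]
      have h3 : ((∑ m, R f (ω m) k) / M - mn f k) * w k ≤ θ * |w k| := by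
        calc ((∑ m, R f (ω m) k) / M - mn f k) * w k
            ≤ |((∑ m, R f (ω m) k) / M - mn f k) * w k| := le_abs_self _
        _ = |(∑ m, R f (ω m) k) / M - mn f k| * |w k| := abs_mul _ _
        _ ≤ θ * |w k| := mul_le_mul_of_nonneg_right h2 (abs_nonneg _)
      have h4 : ((∑ m, R f (ω m) k) / M) * w k
          = mn f k * w k + ((∑ m, R f (ω m) k) / M - mn f k) * w k := by ring
      rw [h4]
      linarith [h3]
    calc ∑ k, ((∑ m, R f (ω m) k) / M) * w k
        ≤ ∑ k, (mn f k * w k + θ * |w k|) := Finset.sum_le_sum fun k _ => hstep k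
    _ = (∑ k, mn f k * w k) + θ * ∑ k, |w k| := by
        rw [Finset.sum_add_distrib, Finset.mul_sum]
    _ ≤ univ.sup' univ_nonempty
          (fun f : Φ => ∑ a, (μ {a}).toReal * ∑ k, R f a k * w k) + θ * ∑ k, |w k| := by
        have hswap : ∑ k, mn f k * w k = ∑ a, (μ {a}).toReal * ∑ k, R f a k * w k := by
          rw [hmn]
          calc ∑ k, (∑ a, ν a * R f a k) * w k
              = ∑ k, ∑ a, ν a * (R f a k * w k) := Finset.sum_congr rfl fun k _ => by
                rw [Finset.sum_mul]; exact Finset.sum_congr rfl fun a _ => by ring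
          _ = ∑ a, ∑ k, ν a * (R f a k * w k) := Finset.sum_comm
          _ = ∑ a, (μ {a}).toReal * ∑ k, R f a k * w k := Finset.sum_congr rfl fun a _ => by
                rw [← Finset.mul_sum, hνdef]
        rw [hswap]
        have hle := Finset.le_sup'
          (fun f : Φ => ∑ a, (μ {a}).toReal * ∑ k, R f a k * w k) (Finset.mem_univ f)
        linarith [hle]
  -- the per-coordinate tail bounds
  have hY : ∀ (f : Φ) (k : Fin K) (s : Bool),
      ∑ ω ∈ univ.filter (fun ω : Fin M → A => (M : ℝ) * θ <
          ∑ m, (if s then R f (ω m) k - mn f k else mn f k - R f (ω m) k)), W ω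
        ≤ Real.exp (-(M:ℝ) * ε ^ 2 / 2) := by
    intro f k s
    have hmean0 : ∑ a, ν a * (R f a k - mn f k) = 0 := by
      simp only [mul_sub, Finset.sum_sub_distrib, ← Finset.sum_mul, hν1, one_mul, hmn]
      simp
    have hbd := hmnbd f k
    rw [abs_le] at hbd
    have key : ∀ (X : A → ℝ) (lo hi : ℝ), (∀ a, lo ≤ X a) → (∀ a, X a ≤ hi) →
        hi - lo ≤ 2 * Δ → (∑ a, ν a * X a = 0) →
        ∑ ω ∈ univ.filter (fun ω : Fin M → A => (M : ℝ) * θ < ∑ m, X (ω m)), W ω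
          ≤ Real.exp (-(M:ℝ) * ε ^ 2 / 2) := by
      intro X lo hi hlo hhi hr hm0
      have := chernoff_tail (M := M) ν hν0 hν1 X Δ hΔ lo hi hlo hhi hr hm0 θ hθ0
      have hexpeq : Real.exp (-(M:ℝ) * θ ^ 2 / (2 * Δ ^ 2))
          = Real.exp (-(M:ℝ) * ε ^ 2 / 2) := by
        congr 1
        rw [hθdef]
        field_simp
      rw [hexpeq] at this
      exact this
    cases s with
    | true =>
      simp only [if_true]
      refine key (fun a => R f a k - mn f k) (-Δ - mn f k) (Δ - mn f k) ?_ ?_ (by linarith) hmean0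
      · intro a
        have h := (abs_le.mp (hbound f a k)).1
        show -Δ - mn f k ≤ R f a k - mn f k
        linarith
      · intro a
        have h := (abs_le.mp (hbound f a k)).2
        show R f a k - mn f k ≤ Δ - mn f k
        linarith
    | false =>
      simp only [Bool.false_eq_true, if_false]
      have hmean0' : ∑ a, ν a * (mn f k - R f a k) = 0 := by
        rw [Finset.sum_congr rfl (fun a _ => by ring_nf : ∀ a ∈ univ,
          ν a * (mn f k - R f a k) = -(ν a * (R f a k - mn f k)))]
        rw [Finset.sum_neg_distrib, hmean0, neg_zero]
      refine key (fun a => mn f k - R f a k) (mn f k - Δ) (mn f k + Δ) ?_ ?_ (by linarith) hmean0'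
      · intro a
        have h := (abs_le.mp (hbound f a k)).2
        show mn f k - Δ ≤ mn f k - R f a k
        linarith
      · intro a
        have h := (abs_le.mp (hbound f a k)).1
        show mn f k - R f a k ≤ mn f k + Δ
        linarith
  -- union bound over bad events
  have hbadsum : ∑ ω ∈ univ.filter (fun ω => ¬ E ω), W ω ≤ δ := by
    set B : Φ × Fin K × Bool → Finset (Fin M → A) := fun p =>
      univ.filter (fun ω : Fin M → A => (M : ℝ) * θ <
        ∑ m, (if p.2.2 then R p.1 (ω m) p.2.1 - mn p.1 p.2.1
              else mn p.1 p.2.1 - R p.1 (ω m) p.2.1)) with hB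
    have hsub : univ.filter (fun ω => ¬ E ω) ⊆ univ.biUnion B := by
      intro ω hω
      rw [Finset.mem_filter] at hω
      have hne := hω.2
      simp only [hE] at hne
      push_neg at hne
      obtain ⟨f, k, hfk⟩ := hne
      rw [Finset.mem_biUnion]
      have hsum : ∀ s : Bool, ∑ m : Fin M, (if s then R f (ω m) k - mn f k
          else mn f k - R f (ω m) k)
          = (if s then (∑ m, R f (ω m) k) - M * mn f k
             else M * mn f k - ∑ m, R f (ω m) k) := by
        intro s
        cases s <;> simp [Finset.sum_sub_distrib, Finset.sum_const, nsmul_eq_mul, mul_comm]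
      rcases lt_abs.mp hfk with h | h
      · exact ⟨(f, k, true), Finset.mem_univ _, by
          rw [hB, Finset.mem_filter]
          exact ⟨Finset.mem_univ _, by rw [hsum true]; simpa using h⟩⟩
      · exact ⟨(f, k, false), Finset.mem_univ _, by
          rw [hB, Finset.mem_filter]
          refine ⟨Finset.mem_univ _, by rw [hsum false]; simp; linarith⟩⟩
    calc ∑ ω ∈ univ.filter (fun ω => ¬ E ω), W ω
        ≤ ∑ ω ∈ univ.biUnion B, W ω :=
          Finset.sum_le_sum_of_subset_of_nonneg hsub fun ω _ _ => hW0 ω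
    _ ≤ ∑ p : Φ × Fin K × Bool, ∑ ω ∈ B p, W ω := sum_biUnion_le' univ B W hW0
    _ ≤ ∑ _p : Φ × Fin K × Bool, Real.exp (-(M:ℝ) * ε ^ 2 / 2) :=
          Finset.sum_le_sum fun p _ => hY p.1 p.2.1 p.2.2
    _ = (Fintype.card Φ : ℝ) * K * 2 * Real.exp (-(M:ℝ) * ε ^ 2 / 2) := by
          rw [Finset.sum_const, Finset.card_univ, nsmul_eq_mul]
          simp [Fintype.card_prod]
          ring
    _ ≤ (Fintype.card Φ : ℝ) * K * 2 * (δ / (2 * (Fintype.card Φ : ℝ) * K)) := by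
          apply mul_le_mul_of_nonneg_left hexp (by positivity)
    _ = δ := by field_simp
  -- total mass is one
  have htot : ∑ ω : Fin M → A, W ω = 1 := by
    rw [hWdef]
    rw [show (univ : Finset (Fin M → A)) = Fintype.piFinset (fun _ : Fin M => univ) from
      (Fintype.piFinset_univ).symm]
    rw [← Finset.prod_univ_sum (fun _ : Fin M => (univ : Finset A)) (fun _ a => ν a)]
    rw [Finset.prod_congr rfl fun m _ => hν1]
    simp
  have hgood : 1 - δ ≤ ∑ ω ∈ univ.filter E, W ω := by
    have := Finset.sum_filter_add_sum_filter_not univ E W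
    linarith [hbadsum, this, htot]
  -- wrap up
  have hfinal := pi_meas_eq μ (fun ω : Fin M → A => ∀ w : Fin K → ℝ,
      univ.sup' univ_nonempty
          (fun f : Φ => ∑ a, ((univ.filter fun m => ω m = a).card : ℝ) / M *
            ∑ k, R f a k * w k) ≤
        univ.sup' univ_nonempty
            (fun f : Φ => ∑ a, (μ {a}).toReal * ∑ k, R f a k * w k) + θ * ∑ k, |w k|)
  rw [hθdef] at hfinal
  rw [hfinal]
  apply ENNReal.ofReal_le_ofReal
  calc 1 - δ ≤ ∑ ω ∈ univ.filter E, W ω := hgood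
  _ = ∑ ω ∈ univ.filter E, ∏ m, (μ {ω m}).toReal := by
      simp only [hWdef, hνdef]
  _ ≤ _ := by
      apply Finset.sum_le_sum_of_subset_of_nonneg
      · refine Finset.monotone_filter_right _ ?_
        intro ω _ hω
        have h := hdet ω hω
        rw [hθdef] at h
        exact h
      · intro ω _ _
        exact Finset.prod_nonneg fun m _ => ENNReal.toReal_nonneg
end

section
/- Fix a finite nonempty index set Φ, a nonempty finite outcome set A, a natural number K, for every f ∈ Φ a matrix R^f ∈ ℝ^{A×K} with rows r^f(a), and a probability distribution σ̃ on A. Define the dual objective D(λ) = Σ_{f∈Φ} max_{g∈Φ} ( (Σ_{a∈A} σ̃_a r^g(a)) · λ^f ) + log Σ_{a∈A} exp( −Σ_{f∈Φ} r^f(a)·λ^f ) for λ = (λ^f)_{f∈Φ} with each λ^f ∈ ℝ^K. Then weak duality holds: for every σ̂ in the ICE polytope determined by σ̃ and every such λ, H(σ̂) ≤ D(λ). -/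
open Finset

/-- Membership in the ICE polytope determined by `σt`: `σh` is a distribution on
`A` such that for every `f ∈ Φ` there is a probability vector `η ∈ Δ(Φ)` with
`σhᵀR^f = Σ_g η_g σtᵀR^g`. -/
def memICE {Φ A : Type*} [Fintype Φ] [Fintype A] {K : ℕ}
    (R : Φ → A → Fin K → ℝ) (σt σh : A → ℝ) : Prop :=
  σh ∈ stdSimplex ℝ A ∧
    ∀ f : Φ, ∃ η : Φ → ℝ, η ∈ stdSimplex ℝ Φ ∧
      ∀ k : Fin K, ∑ a, σh a * R f a k = ∑ g, η g * ∑ a, σt a * R g a k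

/-- The dual objective of the MaxEnt ICE problem determined by `σt`. -/
noncomputable def dualObj {Φ A : Type*} [Fintype Φ] [Nonempty Φ] [Fintype A]
    {K : ℕ} (R : Φ → A → Fin K → ℝ) (σt : A → ℝ) (l : Φ → Fin K → ℝ) : ℝ :=
  (∑ f : Φ, univ.sup' univ_nonempty
      (fun g : Φ => ∑ k, (∑ a, σt a * R g a k) * l f k)) +
    Real.log (∑ a, Real.exp (-∑ f : Φ, ∑ k, R f a k * l f k))

lemma pointwise_gibbs {x p : ℝ} (hx : 0 ≤ x) (hp : 0 < p) :
    x - p ≤ x * Real.log x - x * Real.log p := by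
  rcases eq_or_lt_of_le hx with h | h
  · simp [← h]; exact hp.le
  · have h1 : Real.log (p / x) ≤ p / x - 1 := Real.log_le_sub_one_of_pos (by positivity)
    have h2 : Real.log (p / x) = Real.log p - Real.log x := Real.log_div hp.ne' h.ne'
    have h3 := mul_le_mul_of_nonneg_left h1 hx
    rw [h2] at h3
    have hx' : x * (p / x - 1) = p - x := by field_simp
    nlinarith

lemma gibbs_s10 {A : Type*} [Fintype A] [Nonempty A] {σ : A → ℝ}
    (hσ : σ ∈ stdSimplex ℝ A) (c : A → ℝ) :
    -∑ a, σ a * Real.log (σ a) ≤ ∑ a, σ a * c a + Real.log (∑ a, Real.exp (-c a)) := by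
  set Z := ∑ a, Real.exp (-c a) with hZdef
  have hZ : 0 < Z := Finset.sum_pos (fun a _ => Real.exp_pos _) univ_nonempty
  have key : ∀ a : A, σ a - Real.exp (-c a) / Z ≤
      σ a * Real.log (σ a) + σ a * c a + σ a * Real.log Z := by
    intro a
    have hp : 0 < Real.exp (-c a) / Z := by positivity
    have h := pointwise_gibbs (hσ.1 a) hp
    have hlog : Real.log (Real.exp (-c a) / Z) = -c a - Real.log Z := by
      rw [Real.log_div (Real.exp_ne_zero _) hZ.ne', Real.log_exp]
    rw [hlog] at h
    nlinarith
  have hsum := Finset.sum_le_sum (fun a (_ : a ∈ univ) => key a)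
  have h1 : ∑ a, (σ a - Real.exp (-c a) / Z) = 0 := by
    rw [Finset.sum_sub_distrib, ← Finset.sum_div, hσ.2, ← hZdef]
    field_simp
    norm_num
  have h2 : ∑ a, (σ a * Real.log (σ a) + σ a * c a + σ a * Real.log Z)
      = ∑ a, σ a * Real.log (σ a) + ∑ a, σ a * c a + Real.log Z := by
    rw [Finset.sum_add_distrib, Finset.sum_add_distrib, ← Finset.sum_mul, hσ.2, one_mul]
  rw [h1, h2] at hsum
  linarith

/-- **Weak duality for MaxEnt ICE.**
For every `σh` in the ICE polytope determined by `σt` and every collection of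
dual multipliers `l = (λ^f)_{f∈Φ}`, the Shannon entropy of `σh` is at most the
dual objective `D(l)`. -/
theorem maxEntICE_weak_duality
    {Φ A : Type*} [Fintype Φ] [Nonempty Φ] [Fintype A] [Nonempty A]
    {K : ℕ} (R : Φ → A → Fin K → ℝ)
    (σt : A → ℝ) (hσt : σt ∈ stdSimplex ℝ A)
    (σh : A → ℝ) (hσh : memICE R σt σh) (l : Φ → Fin K → ℝ) :
    shannonEntropy σh ≤ dualObj R σt l := by
  obtain ⟨hσ, hICE⟩ := hσh
  have hg := gibbs_s10 hσ (fun a => ∑ f : Φ, ∑ k, R f a k * l f k)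
  rw [shannonEntropy, dualObj]
  refine hg.trans (add_le_add_left ?_ _)
  -- bound the linear term by the sum of maxima
  have hswap : ∑ a, σh a * ∑ f : Φ, ∑ k, R f a k * l f k
      = ∑ f : Φ, ∑ k, (∑ a, σh a * R f a k) * l f k := by
    simp only [Finset.mul_sum, Finset.sum_mul, mul_assoc]
    rw [Finset.sum_comm]
    exact Finset.sum_congr rfl fun f _ => Finset.sum_comm
  rw [hswap]
  apply Finset.sum_le_sum
  intro f _
  obtain ⟨η, hη, hηe⟩ := hICE f
  have h1 : ∑ k, (∑ a, σh a * R f a k) * l f k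
      = ∑ g, η g * ∑ k, (∑ a, σt a * R g a k) * l f k := by
    simp only [hηe, Finset.sum_mul, Finset.mul_sum, mul_assoc]
    exact Finset.sum_comm
  rw [h1]
  calc ∑ g, η g * ∑ k, (∑ a, σt a * R g a k) * l f k
      ≤ ∑ g, η g * (univ.sup' univ_nonempty
          (fun g : Φ => ∑ k, (∑ a, σt a * R g a k) * l f k)) := by
        apply Finset.sum_le_sum
        intro g _
        exact mul_le_mul_of_nonneg_left
          (Finset.le_sup' (f := fun g : Φ => ∑ k, (∑ a, σt a * R g a k) * l f k)
            (Finset.mem_univ g)) (hη.1 g)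
    _ = _ := by rw [← Finset.sum_mul, hη.2, one_mul]
end

section
/- Fix a finite nonempty index set Φ, a nonempty finite outcome set A, a natural number K, for every f ∈ Φ a matrix R^f ∈ ℝ^{A×K} with rows r^f(a), and a probability distribution σ̃ on A. Define the dual objective D(λ) = Σ_{f∈Φ} max_{g∈Φ} ( (Σ_{a∈A} σ̃_a r^g(a)) · λ^f ) + log Σ_{a∈A} exp( −Σ_{f∈Φ} r^f(a)·λ^f ) for λ = (λ^f)_{f∈Φ} with each λ^f ∈ ℝ^K. Then strong duality holds: the maximum of the Shannon entropy H(σ̂) over all σ̂ in the ICE polytope determined by σ̃ equals the infimum of D(λ) over all λ ∈ (ℝ^K)^Φ. -/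
open Finset

set_option linter.unusedSectionVars false
namespace MaxEntICEAux
open scoped Classical Pointwise

variable {Φ A : Type*} [Fintype Φ] [Nonempty Φ] [Fintype A] [Nonempty A] {K : ℕ}

lemma shannonEntropy_eq (σ : A → ℝ) : shannonEntropy σ = ∑ a, Real.negMulLog (σ a) := by
  simp [shannonEntropy, Real.negMulLog_eq_neg]

lemma gibbs_le {σ : A → ℝ} (hσ : σ ∈ stdSimplex ℝ A) (u : A → ℝ) :
    shannonEntropy σ + ∑ a, σ a * u a ≤ Real.log (∑ a, Real.exp (u a)) := by
  have hZ : 0 < ∑ a, Real.exp (u a) :=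
    Finset.sum_pos (fun a _ => Real.exp_pos _) Finset.univ_nonempty
  set Z := ∑ a, Real.exp (u a) with hZdef
  have key : ∀ a : A, σ a * u a - σ a * Real.log (σ a)
      ≤ Real.exp (u a) / Z - σ a + σ a * Real.log Z := by
    intro a
    rcases eq_or_lt_of_le (hσ.1 a) with h | h
    · rw [← h]; simp; positivity
    · have ht : 0 < Real.exp (u a) / (σ a * Z) := by positivity
      have hlog := Real.log_le_sub_one_of_pos ht
      rw [Real.log_div (Real.exp_ne_zero _) (by positivity), Real.log_exp,
        Real.log_mul (ne_of_gt h) (ne_of_gt hZ)] at hlog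
      have h2 := mul_le_mul_of_nonneg_left hlog (le_of_lt h)
      have he : σ a * (Real.exp (u a) / (σ a * Z)) = Real.exp (u a) / Z := by
        field_simp
      nlinarith [h2]
  have hsum : shannonEntropy σ + ∑ a, σ a * u a
      = ∑ a, (σ a * u a - σ a * Real.log (σ a)) := by
    rw [Finset.sum_sub_distrib, shannonEntropy]; ring
  rw [hsum]
  calc ∑ a, (σ a * u a - σ a * Real.log (σ a))
      ≤ ∑ a, (Real.exp (u a) / Z - σ a + σ a * Real.log Z) :=
        Finset.sum_le_sum fun a _ => key a
    _ = (∑ a, Real.exp (u a)) / Z - (∑ a, σ a) + (∑ a, σ a) * Real.log Z := by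
        rw [Finset.sum_add_distrib, Finset.sum_sub_distrib, Finset.sum_div,
          Finset.sum_mul]
    _ = Real.log Z := by rw [hσ.2, ← hZdef, div_self (ne_of_gt hZ)]; ring

lemma softmax_mem (u : A → ℝ) :
    (fun a => Real.exp (u a) / ∑ b, Real.exp (u b)) ∈ stdSimplex ℝ A := by
  have hZ : 0 < ∑ b, Real.exp (u b) :=
    Finset.sum_pos (fun a _ => Real.exp_pos _) Finset.univ_nonempty
  exact ⟨fun a => by positivity, by rw [← Finset.sum_div, div_self (ne_of_gt hZ)]⟩

lemma gibbs_eq (u : A → ℝ) :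
    shannonEntropy (fun a => Real.exp (u a) / ∑ b, Real.exp (u b))
      + ∑ a, (Real.exp (u a) / ∑ b, Real.exp (u b)) * u a
      = Real.log (∑ a, Real.exp (u a)) := by
  have hZ : 0 < ∑ b, Real.exp (u b) :=
    Finset.sum_pos (fun a _ => Real.exp_pos _) Finset.univ_nonempty
  set Z := ∑ b, Real.exp (u b) with hZdef
  have hs : ∑ a, Real.exp (u a) / Z = 1 := by
    rw [← Finset.sum_div, ← hZdef, div_self (ne_of_gt hZ)]
  simp only [shannonEntropy, Real.log_div (Real.exp_ne_zero _) (ne_of_gt hZ),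
    Real.log_exp]
  have h1 : ∀ a : A, Real.exp (u a) / Z * (u a - Real.log Z)
      = Real.exp (u a) / Z * u a - Real.exp (u a) / Z * Real.log Z :=
    fun a => by ring
  simp_rw [h1]
  rw [Finset.sum_sub_distrib, ← Finset.sum_mul, hs]
  ring

end MaxEntICEAux

namespace MaxEntICEAux
open scoped Classical Pointwise
variable {Φ A : Type*} [Fintype Φ] [Nonempty Φ] [Fintype A] [Nonempty A] {K : ℕ}
open scoped Classical in
lemma sum_swap3 (R : Φ → A → Fin K → ℝ) (σ : A → ℝ) (l : Φ → Fin K → ℝ) :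
    ∑ a, σ a * ∑ f, ∑ k, R f a k * l f k
      = ∑ f, ∑ k, (∑ a, σ a * R f a k) * l f k := by
  simp_rw [Finset.mul_sum, Finset.sum_mul, ← mul_assoc]
  rw [Finset.sum_comm]
  exact Finset.sum_congr rfl fun f _ => Finset.sum_comm

lemma mem_simplex_single (f : Φ) : (fun g => if g = f then (1:ℝ) else 0) ∈ stdSimplex ℝ Φ := by
  constructor
  · intro g; dsimp only; split <;> norm_num
  · simp

lemma σt_memICE (R : Φ → A → Fin K → ℝ) {σt : A → ℝ} (hσt : σt ∈ stdSimplex ℝ A) :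
    memICE R σt σt := by
  refine ⟨hσt, fun f => ⟨fun g => if g = f then 1 else 0, mem_simplex_single f, fun k => ?_⟩⟩
  simp

lemma weak_duality (R : Φ → A → Fin K → ℝ) {σt σ : A → ℝ} (hσ : memICE R σt σ)
    (l : Φ → Fin K → ℝ) : shannonEntropy σ ≤ dualObj R σt l := by
  have h1 := gibbs_le hσ.1 (fun a => -∑ f, ∑ k, R f a k * l f k)
  have h2 : ∑ a, σ a * -∑ f, ∑ k, R f a k * l f k
      = -∑ f, ∑ k, (∑ a, σ a * R f a k) * l f k := by
    rw [← sum_swap3 R σ l]; simp [mul_comm]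
  rw [h2] at h1
  have h3 : ∑ f, ∑ k, (∑ a, σ a * R f a k) * l f k
      ≤ ∑ f : Φ, univ.sup' univ_nonempty
        (fun g : Φ => ∑ k, (∑ a, σt a * R g a k) * l f k) := by
    refine Finset.sum_le_sum fun f _ => ?_
    obtain ⟨η, hη, hηeq⟩ := hσ.2 f
    have : ∑ k, (∑ a, σ a * R f a k) * l f k
        = ∑ g, η g * ∑ k, (∑ a, σt a * R g a k) * l f k := by
      simp_rw [hηeq, Finset.sum_mul, Finset.mul_sum, mul_assoc]
      rw [Finset.sum_comm]
      simp [Finset.sum_mul, mul_assoc]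
    rw [this]
    calc ∑ g, η g * ∑ k, (∑ a, σt a * R g a k) * l f k
        ≤ ∑ g, η g * (univ.sup' univ_nonempty
            (fun g : Φ => ∑ k, (∑ a, σt a * R g a k) * l f k)) := by
          refine Finset.sum_le_sum fun g _ => ?_
          have hle := Finset.le_sup' (fun g : Φ => ∑ k, (∑ a, σt a * R g a k) * l f k)
            (Finset.mem_univ g)
          exact mul_le_mul_of_nonneg_left hle (hη.1 g)
      _ = _ := by rw [← Finset.sum_mul, hη.2, one_mul]
  rw [dualObj]
  linarith

lemma entropy_le_log_card {σ : A → ℝ} (hσ : σ ∈ stdSimplex ℝ A) :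
    shannonEntropy σ ≤ Real.log (Fintype.card A) := by
  have := gibbs_le hσ (fun _ => 0)
  simpa using this

set_option maxHeartbeats 1000000 in
lemma strong_aux (R : Φ → A → Fin K → ℝ) {σt : A → ℝ} (hσt : σt ∈ stdSimplex ℝ A)
    {p : ℝ} (hp : ∀ σ : A → ℝ, memICE R σt σ → shannonEntropy σ ≤ p)
    {ε : ℝ} (hε : 0 < ε) : ∃ l, dualObj R σt l < p + ε := by
  classical
  set X : Set ((A → ℝ) × (Φ → Φ → ℝ)) :=
    (stdSimplex ℝ A) ×ˢ (Set.univ.pi fun _ : Φ => stdSimplex ℝ Φ) with hX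
  set F : ((A → ℝ) × (Φ → Φ → ℝ)) → ((Φ → Fin K → ℝ) × ℝ) :=
    fun x => (fun f k => (∑ a, x.1 a * R f a k) - ∑ g, x.2 f g * ∑ a, σt a * R g a k,
      ∑ a, Real.negMulLog (x.1 a)) with hF
  set S : Set ((Φ → Fin K → ℝ) × ℝ) := F '' X + (({0} : Set (Φ → Fin K → ℝ)) ×ˢ Set.Iic (0:ℝ)) with hS
  have hmemS : ∀ z, z ∈ S ↔ ∃ x ∈ X, (F x).1 = z.1 ∧ z.2 ≤ (F x).2 := by
    intro z
    rw [hS, Set.mem_add]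
    constructor
    · rintro ⟨w, ⟨x, hx, rfl⟩, c, hc, rfl⟩
      obtain ⟨hc1, hc2⟩ := hc
      refine ⟨x, hx, ?_, ?_⟩
      · simp [Set.mem_singleton_iff.mp hc1]
      · simp only [Prod.snd_add]
        have : c.2 ≤ 0 := hc2
        linarith
    · rintro ⟨x, hx, h1, h2⟩
      refine ⟨F x, ⟨x, hx, rfl⟩, z - F x, ⟨?_, ?_⟩, by abel⟩
      · simp [Prod.fst_sub, ← h1]
      · simpa [Prod.snd_sub] using h2
  have hXc : IsCompact X :=
    (isCompact_stdSimplex _ _).prod (isCompact_univ_pi fun _ => isCompact_stdSimplex _ _)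
  have hFc : Continuous F := by
    rw [hF]
    refine Continuous.prodMk ?_ ?_
    · refine continuous_pi fun f => continuous_pi fun k => ?_
      fun_prop
    · fun_prop
  have hSclosed : IsClosed S := by
    rw [hS]
    exact IsClosed.add_left_of_isCompact ((isClosed_singleton (x := (0 : Φ → Fin K → ℝ))).prod isClosed_Iic)
      (hXc.image hFc)
  have hSconv : Convex ℝ S := by
    intro z1 hz1 z2 hz2 θ1 θ2 hθ1 hθ2 hθ
    rw [hmemS] at hz1 hz2 ⊢
    obtain ⟨x1, hx1, hy1, ht1⟩ := hz1
    obtain ⟨x2, hx2, hy2, ht2⟩ := hz2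
    refine ⟨θ1 • x1 + θ2 • x2, ⟨?_, ?_⟩, ?_, ?_⟩
    · exact (convex_stdSimplex ℝ A) hx1.1 hx2.1 hθ1 hθ2 hθ
    · intro f _
      exact (convex_stdSimplex ℝ Φ) (hx1.2 f trivial) (hx2.2 f trivial) hθ1 hθ2 hθ
    · funext f k
      have e1 : z1.1 = (F x1).1 := hy1.symm
      have e2 : z2.1 = (F x2).1 := hy2.symm
      simp only [Prod.fst_add, Prod.smul_fst, Pi.add_apply, Pi.smul_apply,
        smul_eq_mul, e1, e2, hF, Prod.snd_add, Prod.smul_snd, add_mul,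
        Finset.sum_add_distrib, Finset.mul_sum, mul_sub, mul_assoc]
      ring_nf
    · have hconc : ∀ a : A, θ1 * Real.negMulLog (x1.1 a) + θ2 * Real.negMulLog (x2.1 a)
          ≤ Real.negMulLog (θ1 * x1.1 a + θ2 * x2.1 a) := by
        intro a
        have := Real.concaveOn_negMulLog.2 (Set.mem_Ici.mpr (hx1.1.1 a))
          (Set.mem_Ici.mpr (hx2.1.1 a)) hθ1 hθ2 hθ
        simpa [smul_eq_mul] using this
      have hA : θ1 * z1.2 + θ2 * z2.2 ≤ θ1 * (F x1).2 + θ2 * (F x2).2 := by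
        have l1 := mul_le_mul_of_nonneg_left ht1 hθ1
        have l2 := mul_le_mul_of_nonneg_left ht2 hθ2
        linarith
      have hB : θ1 * (F x1).2 + θ2 * (F x2).2
          = ∑ a, (θ1 * Real.negMulLog (x1.1 a) + θ2 * Real.negMulLog (x2.1 a)) := by
        simp only [hF, Finset.mul_sum, Finset.sum_add_distrib]
      calc (θ1 • z1 + θ2 • z2).2 = θ1 * z1.2 + θ2 * z2.2 := rfl
        _ ≤ θ1 * (F x1).2 + θ2 * (F x2).2 := hA
        _ = ∑ a, (θ1 * Real.negMulLog (x1.1 a) + θ2 * Real.negMulLog (x2.1 a)) := hB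
        _ ≤ ∑ a, Real.negMulLog (θ1 * x1.1 a + θ2 * x2.1 a) :=
            Finset.sum_le_sum fun a _ => hconc a
        _ = (F (θ1 • x1 + θ2 • x2)).2 := by
            simp [hF, Prod.fst_add, Prod.smul_fst, Pi.add_apply, Pi.smul_apply,
              smul_eq_mul]
  -- the point (0, p+ε) is not in S
  have hnot : ((0 : Φ → Fin K → ℝ), p + ε) ∉ S := by
    intro hmem
    rw [hmemS] at hmem
    obtain ⟨x, hx, hy, ht⟩ := hmem
    have hice : memICE R σt x.1 := by
      refine ⟨hx.1, fun f => ⟨x.2 f, hx.2 f trivial, fun k => ?_⟩⟩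
      have h0 := congrFun (congrFun hy f) k
      simp only [hF, Pi.zero_apply] at h0
      linarith [h0]
    have hle := hp x.1 hice
    have hge : p + ε ≤ (F x).2 := ht
    rw [hF] at hge
    rw [shannonEntropy_eq] at hle
    dsimp at hge
    linarith
  obtain ⟨φ, u0, hφS, hφpt⟩ := geometric_hahn_banach_closed_point hSconv hSclosed hnot
  set μ : ℝ := φ ((0 : Φ → Fin K → ℝ), (1:ℝ)) with hμ
  have hφdec : ∀ (y : Φ → Fin K → ℝ) (t : ℝ), φ (y, t) = φ (y, 0) + t * μ := by
    intro y t
    have he : ((y, t) : (Φ → Fin K → ℝ) × ℝ)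
        = (y, (0:ℝ)) + t • ((0 : Φ → Fin K → ℝ), (1:ℝ)) := by
      rw [Prod.ext_iff]; constructor <;> simp
    rw [he, map_add, map_smul, smul_eq_mul, hμ]
  have hφ00 : φ ((0 : Φ → Fin K → ℝ), (0:ℝ)) = 0 := by
    have h00 : ((0 : Φ → Fin K → ℝ), (0:ℝ)) = (0 : (Φ → Fin K → ℝ) × ℝ) := rfl
    rw [h00, map_zero]
  rw [hφdec, hφ00, zero_add] at hφpt
  have hx0 : ((σt, fun f g => if g = f then (1:ℝ) else 0) : (A → ℝ) × (Φ → Φ → ℝ)) ∈ X :=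
    ⟨hσt, fun f _ => mem_simplex_single f⟩
  have hFx0 : F ((σt, fun f g => if g = f then (1:ℝ) else 0) : (A → ℝ) × (Φ → Φ → ℝ))
      = ((0 : Φ → Fin K → ℝ), ∑ a, Real.negMulLog (σt a)) := by
    rw [hF]; dsimp only
    congr 1
    funext f k
    simp only [ite_mul, one_mul, zero_mul, Finset.sum_ite_eq', Finset.mem_univ,
      if_true, sub_self, Pi.zero_apply]
  have hz0S : ((0 : Φ → Fin K → ℝ), ∑ a, Real.negMulLog (σt a)) ∈ S := by
    rw [hmemS]
    exact ⟨_, hx0, by rw [hFx0], by rw [hFx0]⟩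
  have hbddt : shannonEntropy σt ≤ p := hp σt (σt_memICE R hσt)
  have hμpos : 0 < μ := by
    have h1 := hφS _ hz0S
    rw [hφdec, hφ00, zero_add] at h1
    have hHp : ∑ a, Real.negMulLog (σt a) < p + ε := by
      rw [← shannonEntropy_eq]; linarith
    nlinarith
  set c : Φ → Fin K → ℝ := fun f k => φ (Pi.single f (Pi.single k 1), 0) with hcdef
  have hpi : ∀ y : Φ → Fin K → ℝ,
      y = ∑ f : Φ, ∑ k : Fin K, y f k • (Pi.single f (Pi.single k 1) : Φ → Fin K → ℝ) := by
    intro y; funext f' k'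
    simp only [Finset.sum_apply, Pi.smul_apply, smul_eq_mul, Pi.single_apply,
      apply_ite (fun g : Fin K → ℝ => g k'), Pi.zero_apply, mul_ite, mul_one, mul_zero]
    simp [Finset.sum_ite_eq]
  have hψ : ∀ y : Φ → Fin K → ℝ, φ (y, 0) = ∑ f, ∑ k, y f k * c f k := by
    intro y
    have he : ((y, (0:ℝ)) : (Φ → Fin K → ℝ) × ℝ)
        = ∑ f : Φ, ∑ k : Fin K,
          (y f k) • (((Pi.single f (Pi.single k 1) : Φ → Fin K → ℝ), (0:ℝ))
            : (Φ → Fin K → ℝ) × ℝ) := by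
      rw [Prod.ext_iff]
      constructor
      · simp only [Prod.fst_sum, Prod.smul_fst, smul_eq_mul]
        exact hpi y
      · simp [Prod.snd_sum]
    rw [he, map_sum]
    refine Finset.sum_congr rfl fun f _ => ?_
    rw [map_sum]
    refine Finset.sum_congr rfl fun k _ => ?_
    rw [map_smul, smul_eq_mul, hcdef]
  set l : Φ → Fin K → ℝ := fun f k => -(c f k) / μ with hldef
  set w : A → ℝ := fun a => -∑ f, ∑ k, R f a k * l f k with hwdef
  set σs : A → ℝ := fun a => Real.exp (w a) / ∑ b, Real.exp (w b) with hσsdef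
  have hσsmem : σs ∈ stdSimplex ℝ A := softmax_mem w
  have hmax : ∀ f : Φ, ∃ g0 : Φ,
      (univ.sup' univ_nonempty fun g : Φ => ∑ k, (∑ a, σt a * R g a k) * l f k)
        = ∑ k, (∑ a, σt a * R g0 a k) * l f k := by
    intro f
    obtain ⟨g0, _, hg0⟩ := Finset.exists_mem_eq_sup' univ_nonempty
      (fun g : Φ => ∑ k, (∑ a, σt a * R g a k) * l f k)
    exact ⟨g0, hg0⟩
  choose gs hgs using hmax
  set x : (A → ℝ) × (Φ → Φ → ℝ) := (σs, fun f g => if g = gs f then 1 else 0) with hxdef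
  have hxX : x ∈ X := ⟨hσsmem, fun f _ => mem_simplex_single (gs f)⟩
  have hxS : F x ∈ S := by rw [hmemS]; exact ⟨x, hxX, rfl, le_refl _⟩
  have hsep := hφS _ hxS
  have hφFx : φ (F x) = (∑ f, ∑ k, (F x).1 f k * c f k) + (F x).2 * μ := by
    rw [show (F x) = ((F x).1, (F x).2) from rfl, hφdec, hψ]
  -- identify the pieces of F x
  have hFx1 : ∀ f k, (F x).1 f k
      = (∑ a, σs a * R f a k) - ∑ a, σt a * R (gs f) a k := by
    intro f k
    rw [hF, hxdef]; dsimp only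
    congr 1
    simp only [ite_mul, one_mul, zero_mul, Finset.sum_ite_eq', Finset.mem_univ, if_true]
  have hFx2 : (F x).2 = shannonEntropy σs := by
    rw [hF, hxdef, shannonEntropy_eq]
  -- log-sum-exp identity
  have E1 : shannonEntropy σs + ∑ a, σs a * w a = Real.log (∑ a, Real.exp (w a)) := by
    rw [hσsdef]; exact gibbs_eq w
  have E2 : ∑ a, σs a * w a = -∑ f, ∑ k, (∑ a, σs a * R f a k) * l f k := by
    rw [← sum_swap3 R σs l, ← Finset.sum_neg_distrib]
    refine Finset.sum_congr rfl fun a _ => ?_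
    show σs a * (-∑ f, ∑ k, R f a k * l f k) = -(σs a * ∑ f, ∑ k, R f a k * l f k)
    ring
  -- final computation
  have hcalc : dualObj R σt l = φ (F x) / μ := by
    rw [dualObj]
    have hsup : (∑ f : Φ, univ.sup' univ_nonempty
        (fun g : Φ => ∑ k, (∑ a, σt a * R g a k) * l f k))
          = ∑ f, ∑ k, (∑ a, σt a * R (gs f) a k) * l f k :=
      Finset.sum_congr rfl fun f _ => hgs f
    have hlog : Real.log (∑ a, Real.exp (-∑ f : Φ, ∑ k, R f a k * l f k))
        = shannonEntropy σs + ∑ a, σs a * w a := by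
      rw [E1, hwdef]
    rw [hsup, hlog, E2, hφFx, hFx2]
    have hnum : ∑ f, ∑ k, (F x).1 f k * c f k
        = ∑ f, ∑ k, ((∑ a, σs a * R f a k) - ∑ a, σt a * R (gs f) a k) * c f k :=
      Finset.sum_congr rfl fun f _ => Finset.sum_congr rfl fun k _ => by rw [hFx1]
    rw [hnum, eq_div_iff (ne_of_gt hμpos)]
    have hlc : ∀ f k, l f k * μ = -c f k := by
      intro f k
      show (-c f k / μ) * μ = -c f k
      field_simp
    have hkey : ∀ f k, ((∑ a, σt a * R (gs f) a k) * l f k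
          - (∑ a, σs a * R f a k) * l f k) * μ
        = ((∑ a, σs a * R f a k) - ∑ a, σt a * R (gs f) a k) * c f k := by
      intro f k
      linear_combination ((∑ a, σt a * R (gs f) a k) - (∑ a, σs a * R f a k)) * (hlc f k)
    have hmain : ∑ f, ∑ k, ((∑ a, σs a * R f a k) - ∑ a, σt a * R (gs f) a k) * c f k
        = (∑ f, ∑ k, (∑ a, σt a * R (gs f) a k) * l f k
          - ∑ f, ∑ k, (∑ a, σs a * R f a k) * l f k) * μ := by
      rw [← Finset.sum_sub_distrib, Finset.sum_mul]
      refine Finset.sum_congr rfl fun f _ => ?_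
      rw [← Finset.sum_sub_distrib, Finset.sum_mul]
      refine Finset.sum_congr rfl fun k _ => ?_
      exact (hkey f k).symm
    rw [hmain]
    ring
  refine ⟨l, ?_⟩
  rw [hcalc, div_lt_iff₀ hμpos]
  calc φ (F x) < u0 := hsep
    _ < (p + ε) * μ := hφpt
end MaxEntICEAux

/-- **Strong duality for MaxEnt ICE.**
The maximum of the Shannon entropy over the ICE polytope determined by `σt`
(a nonempty compact convex set, so the maximum is attained) equals the infimum
of the dual objective `D(λ)` over all dual multipliers `λ ∈ (ℝ^K)^Φ`. -/
theorem maxEntICE_strong_duality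
    {Φ A : Type*} [Fintype Φ] [Nonempty Φ] [Fintype A] [Nonempty A]
    {K : ℕ} (R : Φ → A → Fin K → ℝ)
    (σt : A → ℝ) (hσt : σt ∈ stdSimplex ℝ A) :
    (⨆ σh : {σ : A → ℝ // memICE R σt σ}, shannonEntropy σh.1) =
      ⨅ l : Φ → Fin K → ℝ, dualObj R σt l := by
  classical
  have hne : Nonempty {σ : A → ℝ // memICE R σt σ} :=
    ⟨⟨σt, MaxEntICEAux.σt_memICE R hσt⟩⟩
  have hbdd : BddAbove (Set.range fun σh : {σ : A → ℝ // memICE R σt σ} =>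
      shannonEntropy σh.1) := by
    refine ⟨Real.log (Fintype.card A), ?_⟩
    rintro y ⟨σh, rfl⟩
    exact MaxEntICEAux.entropy_le_log_card σh.2.1
  set p := ⨆ σh : {σ : A → ℝ // memICE R σt σ}, shannonEntropy σh.1 with hpdef
  have hple : p ≤ ⨅ l, dualObj R σt l :=
    le_ciInf fun l => ciSup_le fun σh => MaxEntICEAux.weak_duality R σh.2 l
  have hbddD : BddBelow (Set.range fun l : Φ → Fin K → ℝ => dualObj R σt l) := by
    refine ⟨shannonEntropy σt, ?_⟩
    rintro y ⟨l, rfl⟩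
    exact MaxEntICEAux.weak_duality R (MaxEntICEAux.σt_memICE R hσt) l
  have hge : ⨅ l, dualObj R σt l ≤ p := by
    refine le_of_forall_pos_le_add fun ε hε => ?_
    have hp : ∀ σ : A → ℝ, memICE R σt σ → shannonEntropy σ ≤ p := fun σ hσ =>
      le_ciSup hbdd (⟨σ, hσ⟩ : {σ : A → ℝ // memICE R σt σ})
    obtain ⟨l, hl⟩ := MaxEntICEAux.strong_aux R hσt hp hε
    exact le_trans (ciInf_le hbddD l) (le_of_lt hl)
  exact le_antisymm hple hge
end
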